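/- arXiv:1102.3892 — 5 statements merged into one kernel-verified Lean document; each statement's English description precedes it below -/
import Mathlib

section
/- For every n ≥ 2, the assignment σ_i ↦ σ_{2i}·σ_{2i+1}·σ_{2i−1}^{−1}·σ_{2i}^{−1} (for 1 ≤ i ≤ n−1) extends to a group homomorphism Φ from the braid group B_n to the braid group B_{2n}. -/
noncomputable section

/-- Relators for Artin's braid group `B_n` on generators `σ 1, …, σ (n-1)`
(out-of-range generators are killed). -/
def braidRels (n : ℕ) : Set (FreeGroup ℕ) :=
  {x | ∃ i : ℕ, (i = 0 ∨ n ≤ i) ∧ x = FreeGroup.of i} ∪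
  {x | ∃ i j : ℕ, 1 ≤ i ∧ i + 1 < j ∧ j < n ∧
      x = FreeGroup.of i * FreeGroup.of j * (FreeGroup.of i)⁻¹ * (FreeGroup.of j)⁻¹} ∪
  {x | ∃ i : ℕ, 1 ≤ i ∧ i + 1 < n ∧
      x = FreeGroup.of i * FreeGroup.of (i + 1) * FreeGroup.of i *
          (FreeGroup.of (i + 1) * FreeGroup.of i * FreeGroup.of (i + 1))⁻¹}

/-- Artin's braid group `B_n`, presented by generators `σ_1, …, σ_{n-1}` with the braid
relations. -/
abbrev BraidGroup (n : ℕ) : Type := PresentedGroup (braidRels n)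

/-- The generator `σ_i` of the braid group `B_n`. -/
def bσ (n i : ℕ) : BraidGroup n := PresentedGroup.of i

set_option maxHeartbeats 1000000 in
theorem braid_key {G : Type*} [Group G] (a b c d e : G)
    (hab : a * b * a = b * a * b) (hbc : b * c * b = c * b * c)
    (hcd : c * d * c = d * c * d) (hde : d * e * d = e * d * e)
    (hac : a * c = c * a) (had : a * d = d * a) (hae : a * e = e * a)
    (hbd : b * d = d * b) (hbe : b * e = e * b) (hce : c * e = e * c) :
    (b * c * a⁻¹ * b⁻¹) * (d * e * c⁻¹ * d⁻¹) * (b * c * a⁻¹ * b⁻¹) =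
      (d * e * c⁻¹ * d⁻¹) * (b * c * a⁻¹ * b⁻¹) * (d * e * c⁻¹ * d⁻¹) := by
  have cac : Commute a c := hac
  have cad : Commute a d := had
  have cae : Commute a e := hae
  have cbd : Commute b d := hbd
  have cbe : Commute b e := hbe
  have cce : Commute c e := hce
  have h1 : d⁻¹ * b = b * d⁻¹ := (((cbd).symm).inv_left).eq
  have h2 : b⁻¹ * d = d * b⁻¹ := ((cbd).inv_left).eq
  have h3 : a⁻¹ * d = d * a⁻¹ := ((cad).inv_left).eq
  have h4 : b⁻¹ * e = e * b⁻¹ := ((cbe).inv_left).eq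
  have h5 : b⁻¹ * c⁻¹ * b = c * b⁻¹ * c⁻¹ := by
    have h0 : b * c * b * (c * b * c)⁻¹ = 1 := mul_inv_eq_one.mpr hbc
    rw [← mul_inv_eq_one]
    calc b⁻¹ * c⁻¹ * b * (c * b⁻¹ * c⁻¹)⁻¹ = c * b⁻¹ * c⁻¹ * b⁻¹ * (b * c * b * (c * b * c)⁻¹) * (b * c * b * c⁻¹) := by group
      _ = 1 := by rw [h0]; group
  have h6 : c⁻¹ * d⁻¹ * c = d * c⁻¹ * d⁻¹ := by
    have h0 : c * d * c * (d * c * d)⁻¹ = 1 := mul_inv_eq_one.mpr hcd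
    rw [← mul_inv_eq_one]
    calc c⁻¹ * d⁻¹ * c * (d * c⁻¹ * d⁻¹)⁻¹ = d * c⁻¹ * d⁻¹ * c⁻¹ * (c * d * c * (d * c * d)⁻¹) * (c * d * c * d⁻¹) := by group
      _ = 1 := by rw [h0]; group
  have h7 : d⁻¹ * a⁻¹ = a⁻¹ * d⁻¹ := ((((cad).symm).inv_left).inv_right).eq
  have h8 : c⁻¹ * a⁻¹ = a⁻¹ * c⁻¹ := ((((cac).symm).inv_left).inv_right).eq
  have h9 : a⁻¹ * e = e * a⁻¹ := ((cae).inv_left).eq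
  have h10 : a⁻¹ * c = c * a⁻¹ := ((cac).inv_left).eq
  have h11 : a⁻¹ * b⁻¹ * a⁻¹ = b⁻¹ * a⁻¹ * b⁻¹ := by
    have h0 : b * a * b * (a * b * a)⁻¹ = 1 := mul_inv_eq_one.mpr hab.symm
    rw [← mul_inv_eq_one]
    calc a⁻¹ * b⁻¹ * a⁻¹ * (b⁻¹ * a⁻¹ * b⁻¹)⁻¹ = b⁻¹ * a⁻¹ * b⁻¹ * (b * a * b * (a * b * a)⁻¹) * (b * a * b) := by group
      _ = 1 := by rw [h0]; group
  have h12 : e * c = c * e := ((cce).symm).eq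
  have h13 : c * d * c = d * c * d := by
    have h0 : c * d * c * (d * c * d)⁻¹ = 1 := mul_inv_eq_one.mpr hcd
    rw [← mul_inv_eq_one]
    calc c * d * c * (d * c * d)⁻¹ = (c * d * c * (d * c * d)⁻¹) := by group
      _ = 1 := by rw [h0]
  have h14 : d * e * d = e * d * e := by
    have h0 : d * e * d * (e * d * e)⁻¹ = 1 := mul_inv_eq_one.mpr hde
    rw [← mul_inv_eq_one]
    calc d * e * d * (e * d * e)⁻¹ = (d * e * d * (e * d * e)⁻¹) := by group
      _ = 1 := by rw [h0]
  have h15 : e * b⁻¹ = b⁻¹ * e := (((cbe).symm).inv_right).eq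
  have h16 : d⁻¹ * b⁻¹ = b⁻¹ * d⁻¹ := ((((cbd).symm).inv_left).inv_right).eq
  have h17 : e * a⁻¹ = a⁻¹ * e := (((cae).symm).inv_right).eq
  have h18 : b⁻¹ * c⁻¹ * b⁻¹ = c⁻¹ * b⁻¹ * c⁻¹ := by
    have h0 : c * b * c * (b * c * b)⁻¹ = 1 := mul_inv_eq_one.mpr hbc.symm
    rw [← mul_inv_eq_one]
    calc b⁻¹ * c⁻¹ * b⁻¹ * (c⁻¹ * b⁻¹ * c⁻¹)⁻¹ = c⁻¹ * b⁻¹ * c⁻¹ * (c * b * c * (b * c * b)⁻¹) * (c * b * c) := by group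
      _ = 1 := by rw [h0]; group
  have h19 : e * c⁻¹ = c⁻¹ * e := (((cce).symm).inv_right).eq
  have h20 : c * e = e * c := (cce).eq
  have h21 : b * d = d * b := (cbd).eq
  have h22 : b * e = e * b := (cbe).eq
  have h23 : d * b⁻¹ = b⁻¹ * d := (((cbd).symm).inv_right).eq
  have h24 : a⁻¹ * c⁻¹ = c⁻¹ * a⁻¹ := (((cac).inv_left).inv_right).eq
  have h25 : b * c * b⁻¹ = c⁻¹ * b * c := by
    have h0 : c * b * c * (b * c * b)⁻¹ = 1 := mul_inv_eq_one.mpr hbc.symm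
    rw [← mul_inv_eq_one]
    calc b * c * b⁻¹ * (c⁻¹ * b * c)⁻¹ = c⁻¹ * (c * b * c * (b * c * b)⁻¹) * (c) := by group
      _ = 1 := by rw [h0]; group
  have h26 : c * d * c⁻¹ = d⁻¹ * c * d := by
    have h0 : d * c * d * (c * d * c)⁻¹ = 1 := mul_inv_eq_one.mpr hcd.symm
    rw [← mul_inv_eq_one]
    calc c * d * c⁻¹ * (d⁻¹ * c * d)⁻¹ = d⁻¹ * (d * c * d * (c * d * c)⁻¹) * (d) := by group
      _ = 1 := by rw [h0]; group
  have h27 : d * a⁻¹ = a⁻¹ * d := (((cad).symm).inv_right).eq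
  have h28 : b * d⁻¹ = d⁻¹ * b := ((cbd).inv_right).eq
  calc (b * c * a⁻¹ * b⁻¹) * (d * e * c⁻¹ * d⁻¹) * (b * c * a⁻¹ * b⁻¹)
      _ = b * c * a⁻¹ * b⁻¹ * d * e * c⁻¹ * ((d⁻¹ * b) * (c * a⁻¹ * b⁻¹)) := by group
      _ = b * c * a⁻¹ * b⁻¹ * d * e * c⁻¹ * ((b * d⁻¹) * (c * a⁻¹ * b⁻¹)) := by rw [h1]
      _ = b * c * a⁻¹ * ((b⁻¹ * d) * (e * c⁻¹ * b * d⁻¹ * c * a⁻¹ * b⁻¹)) := by group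
      _ = b * c * a⁻¹ * ((d * b⁻¹) * (e * c⁻¹ * b * d⁻¹ * c * a⁻¹ * b⁻¹)) := by rw [h2]
      _ = b * c * ((a⁻¹ * d) * (b⁻¹ * e * c⁻¹ * b * d⁻¹ * c * a⁻¹ * b⁻¹)) := by group
      _ = b * c * ((d * a⁻¹) * (b⁻¹ * e * c⁻¹ * b * d⁻¹ * c * a⁻¹ * b⁻¹)) := by rw [h3]
      _ = b * c * d * a⁻¹ * ((b⁻¹ * e) * (c⁻¹ * b * d⁻¹ * c * a⁻¹ * b⁻¹)) := by group
      _ = b * c * d * a⁻¹ * ((e * b⁻¹) * (c⁻¹ * b * d⁻¹ * c * a⁻¹ * b⁻¹)) := by rw [h4]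
      _ = b * c * d * a⁻¹ * e * ((b⁻¹ * c⁻¹ * b) * (d⁻¹ * c * a⁻¹ * b⁻¹)) := by group
      _ = b * c * d * a⁻¹ * e * ((c * b⁻¹ * c⁻¹) * (d⁻¹ * c * a⁻¹ * b⁻¹)) := by rw [h5]
      _ = b * c * d * a⁻¹ * e * c * b⁻¹ * ((c⁻¹ * d⁻¹ * c) * (a⁻¹ * b⁻¹)) := by group
      _ = b * c * d * a⁻¹ * e * c * b⁻¹ * ((d * c⁻¹ * d⁻¹) * (a⁻¹ * b⁻¹)) := by rw [h6]
      _ = b * c * d * a⁻¹ * e * c * b⁻¹ * d * c⁻¹ * ((d⁻¹ * a⁻¹) * (b⁻¹)) := by group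
      _ = b * c * d * a⁻¹ * e * c * b⁻¹ * d * c⁻¹ * ((a⁻¹ * d⁻¹) * (b⁻¹)) := by rw [h7]
      _ = b * c * d * a⁻¹ * e * c * b⁻¹ * d * ((c⁻¹ * a⁻¹) * (d⁻¹ * b⁻¹)) := by group
      _ = b * c * d * a⁻¹ * e * c * b⁻¹ * d * ((a⁻¹ * c⁻¹) * (d⁻¹ * b⁻¹)) := by rw [h8]
      _ = b * c * d * ((a⁻¹ * e) * (c * b⁻¹ * d * a⁻¹ * c⁻¹ * d⁻¹ * b⁻¹)) := by group
      _ = b * c * d * ((e * a⁻¹) * (c * b⁻¹ * d * a⁻¹ * c⁻¹ * d⁻¹ * b⁻¹)) := by rw [h9]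
      _ = b * c * d * e * ((a⁻¹ * c) * (b⁻¹ * d * a⁻¹ * c⁻¹ * d⁻¹ * b⁻¹)) := by group
      _ = b * c * d * e * ((c * a⁻¹) * (b⁻¹ * d * a⁻¹ * c⁻¹ * d⁻¹ * b⁻¹)) := by rw [h10]
      _ = b * c * d * e * c * a⁻¹ * ((b⁻¹ * d) * (a⁻¹ * c⁻¹ * d⁻¹ * b⁻¹)) := by group
      _ = b * c * d * e * c * a⁻¹ * ((d * b⁻¹) * (a⁻¹ * c⁻¹ * d⁻¹ * b⁻¹)) := by rw [h2]
      _ = b * c * d * e * c * ((a⁻¹ * d) * (b⁻¹ * a⁻¹ * c⁻¹ * d⁻¹ * b⁻¹)) := by group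
      _ = b * c * d * e * c * ((d * a⁻¹) * (b⁻¹ * a⁻¹ * c⁻¹ * d⁻¹ * b⁻¹)) := by rw [h3]
      _ = b * c * d * e * c * d * ((a⁻¹ * b⁻¹ * a⁻¹) * (c⁻¹ * d⁻¹ * b⁻¹)) := by group
      _ = b * c * d * e * c * d * ((b⁻¹ * a⁻¹ * b⁻¹) * (c⁻¹ * d⁻¹ * b⁻¹)) := by rw [h11]
      _ = b * c * d * ((e * c) * (d * b⁻¹ * a⁻¹ * b⁻¹ * c⁻¹ * d⁻¹ * b⁻¹)) := by group
      _ = b * c * d * ((c * e) * (d * b⁻¹ * a⁻¹ * b⁻¹ * c⁻¹ * d⁻¹ * b⁻¹)) := by rw [h12]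
      _ = b * ((c * d * c) * (e * d * b⁻¹ * a⁻¹ * b⁻¹ * c⁻¹ * d⁻¹ * b⁻¹)) := by group
      _ = b * ((d * c * d) * (e * d * b⁻¹ * a⁻¹ * b⁻¹ * c⁻¹ * d⁻¹ * b⁻¹)) := by rw [h13]
      _ = b * d * c * ((d * e * d) * (b⁻¹ * a⁻¹ * b⁻¹ * c⁻¹ * d⁻¹ * b⁻¹)) := by group
      _ = b * d * c * ((e * d * e) * (b⁻¹ * a⁻¹ * b⁻¹ * c⁻¹ * d⁻¹ * b⁻¹)) := by rw [h14]
      _ = b * d * c * e * d * ((e * b⁻¹) * (a⁻¹ * b⁻¹ * c⁻¹ * d⁻¹ * b⁻¹)) := by group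
      _ = b * d * c * e * d * ((b⁻¹ * e) * (a⁻¹ * b⁻¹ * c⁻¹ * d⁻¹ * b⁻¹)) := by rw [h15]
      _ = b * d * c * e * d * b⁻¹ * e * a⁻¹ * b⁻¹ * c⁻¹ * ((d⁻¹ * b⁻¹)) := by group
      _ = b * d * c * e * d * b⁻¹ * e * a⁻¹ * b⁻¹ * c⁻¹ * ((b⁻¹ * d⁻¹)) := by rw [h16]
      _ = b * d * c * e * d * b⁻¹ * ((e * a⁻¹) * (b⁻¹ * c⁻¹ * b⁻¹ * d⁻¹)) := by group
      _ = b * d * c * e * d * b⁻¹ * ((a⁻¹ * e) * (b⁻¹ * c⁻¹ * b⁻¹ * d⁻¹)) := by rw [h17]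
      _ = b * d * c * e * d * b⁻¹ * a⁻¹ * e * ((b⁻¹ * c⁻¹ * b⁻¹) * (d⁻¹)) := by group
      _ = b * d * c * e * d * b⁻¹ * a⁻¹ * e * ((c⁻¹ * b⁻¹ * c⁻¹) * (d⁻¹)) := by rw [h18]
      _ = b * d * c * e * d * b⁻¹ * a⁻¹ * ((e * c⁻¹) * (b⁻¹ * c⁻¹ * d⁻¹)) := by group
      _ = b * d * c * e * d * b⁻¹ * a⁻¹ * ((c⁻¹ * e) * (b⁻¹ * c⁻¹ * d⁻¹)) := by rw [h19]
      _ = b * d * ((c * e) * (d * b⁻¹ * a⁻¹ * c⁻¹ * e * b⁻¹ * c⁻¹ * d⁻¹)) := by group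
      _ = b * d * ((e * c) * (d * b⁻¹ * a⁻¹ * c⁻¹ * e * b⁻¹ * c⁻¹ * d⁻¹)) := by rw [h20]
      _ = b * d * e * c * d * b⁻¹ * a⁻¹ * c⁻¹ * ((e * b⁻¹) * (c⁻¹ * d⁻¹)) := by group
      _ = b * d * e * c * d * b⁻¹ * a⁻¹ * c⁻¹ * ((b⁻¹ * e) * (c⁻¹ * d⁻¹)) := by rw [h15]
      _ = (b * d) * (e * c * d * b⁻¹ * a⁻¹ * c⁻¹ * b⁻¹ * e * c⁻¹ * d⁻¹) := by group
      _ = (d * b) * (e * c * d * b⁻¹ * a⁻¹ * c⁻¹ * b⁻¹ * e * c⁻¹ * d⁻¹) := by rw [h21]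
      _ = d * ((b * e) * (c * d * b⁻¹ * a⁻¹ * c⁻¹ * b⁻¹ * e * c⁻¹ * d⁻¹)) := by group
      _ = d * ((e * b) * (c * d * b⁻¹ * a⁻¹ * c⁻¹ * b⁻¹ * e * c⁻¹ * d⁻¹)) := by rw [h22]
      _ = d * e * b * c * ((d * b⁻¹) * (a⁻¹ * c⁻¹ * b⁻¹ * e * c⁻¹ * d⁻¹)) := by group
      _ = d * e * b * c * ((b⁻¹ * d) * (a⁻¹ * c⁻¹ * b⁻¹ * e * c⁻¹ * d⁻¹)) := by rw [h23]
      _ = d * e * b * c * b⁻¹ * d * ((a⁻¹ * c⁻¹) * (b⁻¹ * e * c⁻¹ * d⁻¹)) := by group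
      _ = d * e * b * c * b⁻¹ * d * ((c⁻¹ * a⁻¹) * (b⁻¹ * e * c⁻¹ * d⁻¹)) := by rw [h24]
      _ = d * e * ((b * c * b⁻¹) * (d * c⁻¹ * a⁻¹ * b⁻¹ * e * c⁻¹ * d⁻¹)) := by group
      _ = d * e * ((c⁻¹ * b * c) * (d * c⁻¹ * a⁻¹ * b⁻¹ * e * c⁻¹ * d⁻¹)) := by rw [h25]
      _ = d * e * c⁻¹ * b * ((c * d * c⁻¹) * (a⁻¹ * b⁻¹ * e * c⁻¹ * d⁻¹)) := by group
      _ = d * e * c⁻¹ * b * ((d⁻¹ * c * d) * (a⁻¹ * b⁻¹ * e * c⁻¹ * d⁻¹)) := by rw [h26]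
      _ = d * e * c⁻¹ * b * d⁻¹ * c * ((d * a⁻¹) * (b⁻¹ * e * c⁻¹ * d⁻¹)) := by group
      _ = d * e * c⁻¹ * b * d⁻¹ * c * ((a⁻¹ * d) * (b⁻¹ * e * c⁻¹ * d⁻¹)) := by rw [h27]
      _ = d * e * c⁻¹ * b * d⁻¹ * c * a⁻¹ * ((d * b⁻¹) * (e * c⁻¹ * d⁻¹)) := by group
      _ = d * e * c⁻¹ * b * d⁻¹ * c * a⁻¹ * ((b⁻¹ * d) * (e * c⁻¹ * d⁻¹)) := by rw [h23]
      _ = d * e * c⁻¹ * ((b * d⁻¹) * (c * a⁻¹ * b⁻¹ * d * e * c⁻¹ * d⁻¹)) := by group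
      _ = d * e * c⁻¹ * ((d⁻¹ * b) * (c * a⁻¹ * b⁻¹ * d * e * c⁻¹ * d⁻¹)) := by rw [h28]
      _ = (d * e * c⁻¹ * d⁻¹) * (b * c * a⁻¹ * b⁻¹) * (d * e * c⁻¹ * d⁻¹) := by group


section Aux

lemma comm_block {G : Type*} [Group G] (a b c x y z : G)
    (hax : Commute a x) (hay : Commute a y) (haz : Commute a z)
    (hbx : Commute b x) (hby : Commute b y) (hbz : Commute b z)
    (hcx : Commute c x) (hcy : Commute c y) (hcz : Commute c z) :
    (b * c * a⁻¹ * b⁻¹) * (y * z * x⁻¹ * y⁻¹) = (y * z * x⁻¹ * y⁻¹) * (b * c * a⁻¹ * b⁻¹) := by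
  have hbQ : Commute b (y * z * x⁻¹ * y⁻¹) :=
    ((hby.mul_right hbz).mul_right hbx.inv_right).mul_right hby.inv_right
  have haQ : Commute a (y * z * x⁻¹ * y⁻¹) :=
    ((hay.mul_right haz).mul_right hax.inv_right).mul_right hay.inv_right
  have hcQ : Commute c (y * z * x⁻¹ * y⁻¹) :=
    ((hcy.mul_right hcz).mul_right hcx.inv_right).mul_right hcy.inv_right
  exact (((hbQ.mul_left hcQ).mul_left haQ.inv_left).mul_left hbQ.inv_left).eq
  -- note: mul_left builds Commute (a*b) c from Commute a c and Commute b c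

lemma braidRel_one {α : Type*} {rels : Set (FreeGroup α)} {r : FreeGroup α} (h : r ∈ rels) :
    PresentedGroup.mk rels r = 1 :=
  (QuotientGroup.eq_one_iff _).mpr (Subgroup.subset_normalClosure h)

lemma bσ_kill (m i : ℕ) (h : i = 0 ∨ m ≤ i) : bσ m i = 1 :=
  braidRel_one (Or.inl (Or.inl ⟨i, h, rfl⟩))

lemma bσ_comm (m i j : ℕ) (h1 : 1 ≤ i) (h2 : i + 1 < j) (h3 : j < m) :
    Commute (bσ m i) (bσ m j) := by
  have h := braidRel_one (rels := braidRels m)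
    (Or.inl (Or.inr ⟨i, j, h1, h2, h3, rfl⟩))
  simp only [map_mul, map_inv] at h
  have h' := mul_inv_eq_one.mp h
  exact (mul_inv_eq_iff_eq_mul.mp h' : _)

lemma bσ_braid (m i : ℕ) (h1 : 1 ≤ i) (h2 : i + 1 < m) :
    bσ m i * bσ m (i + 1) * bσ m i = bσ m (i + 1) * bσ m i * bσ m (i + 1) := by
  have h := braidRel_one (rels := braidRels m) (Or.inr ⟨i, h1, h2, rfl⟩)
  simp only [map_mul, map_inv] at h
  exact mul_inv_eq_one.mp h

/-- The map on generators. -/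
def Fmap (n : ℕ) : ℕ → BraidGroup (2 * n) := fun i =>
  if 1 ≤ i ∧ i ≤ n - 1 then
    bσ (2 * n) (2 * i) * bσ (2 * n) (2 * i + 1) *
      (bσ (2 * n) (2 * i - 1))⁻¹ * (bσ (2 * n) (2 * i))⁻¹
  else 1

lemma Fmap_in (n i : ℕ) (h1 : 1 ≤ i) (h2 : i ≤ n - 1) :
    Fmap n i = bσ (2 * n) (2 * i) * bσ (2 * n) (2 * i + 1) *
      (bσ (2 * n) (2 * i - 1))⁻¹ * (bσ (2 * n) (2 * i))⁻¹ := if_pos ⟨h1, h2⟩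

lemma Fmap_rels (n : ℕ) (hn : 2 ≤ n) :
    ∀ r ∈ braidRels n, FreeGroup.lift (Fmap n) r = 1 := by
  intro r hr
  simp only [braidRels, Set.mem_union, Set.mem_setOf_eq] at hr
  obtain ((⟨i, hi, rfl⟩ | ⟨i, j, h1, h2, h3, rfl⟩) | ⟨i, h1, h2, rfl⟩) := hr
  · -- killed generators
    simp only [FreeGroup.lift_apply_of]
    rw [Fmap, if_neg (by omega)]
  · -- commutation
    simp only [map_mul, map_inv, FreeGroup.lift_apply_of]
    rw [Fmap_in n i h1 (by omega), Fmap_in n j (by omega) (by omega)]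
    rw [mul_inv_eq_one, mul_inv_eq_iff_eq_mul]
    exact comm_block _ _ _ _ _ _
      (bσ_comm _ _ _ (by omega) (by omega) (by omega))
      (bσ_comm _ _ _ (by omega) (by omega) (by omega))
      (bσ_comm _ _ _ (by omega) (by omega) (by omega))
      (bσ_comm _ _ _ (by omega) (by omega) (by omega))
      (bσ_comm _ _ _ (by omega) (by omega) (by omega))
      (bσ_comm _ _ _ (by omega) (by omega) (by omega))
      (bσ_comm _ _ _ (by omega) (by omega) (by omega))
      (bσ_comm _ _ _ (by omega) (by omega) (by omega))
      (bσ_comm _ _ _ (by omega) (by omega) (by omega))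
  · -- braid relation
    obtain ⟨k, rfl⟩ : ∃ k, i = k + 1 := ⟨i - 1, by omega⟩
    simp only [map_mul, map_inv, FreeGroup.lift_apply_of]
    rw [Fmap_in n (k + 1) (by omega) (by omega), Fmap_in n (k + 1 + 1) (by omega) (by omega)]
    rw [mul_inv_eq_one]
    simp only [show 2 * (k + 1) = 2 * k + 2 from by omega,
      show 2 * (k + 1) + 1 = 2 * k + 3 from by omega,
      show 2 * (k + 1) - 1 = 2 * k + 1 from by omega,
      show 2 * (k + 1 + 1) = 2 * k + 4 from by omega,
      show 2 * (k + 1 + 1) + 1 = 2 * k + 5 from by omega,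
      show 2 * (k + 1 + 1) - 1 = 2 * k + 3 from by omega]
    have hm : 2 * k + 5 < 2 * n := by omega
    have Hab := bσ_braid (2 * n) (2 * k + 1) (by omega) (by omega)
    have Hbc := bσ_braid (2 * n) (2 * k + 2) (by omega) (by omega)
    have Hcd := bσ_braid (2 * n) (2 * k + 3) (by omega) (by omega)
    have Hde := bσ_braid (2 * n) (2 * k + 4) (by omega) (by omega)
    simp only [show 2 * k + 1 + 1 = 2 * k + 2 from by omega,
      show 2 * k + 2 + 1 = 2 * k + 3 from by omega,
      show 2 * k + 3 + 1 = 2 * k + 4 from by omega,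
      show 2 * k + 4 + 1 = 2 * k + 5 from by omega] at Hab Hbc Hcd Hde
    exact braid_key _ _ _ _ _ Hab Hbc Hcd Hde
      (bσ_comm _ _ _ (by omega) (by omega) (by omega)).eq
      (bσ_comm _ _ _ (by omega) (by omega) (by omega)).eq
      (bσ_comm _ _ _ (by omega) (by omega) (by omega)).eq
      (bσ_comm _ _ _ (by omega) (by omega) (by omega)).eq
      (bσ_comm _ _ _ (by omega) (by omega) (by omega)).eq
      (bσ_comm _ _ _ (by omega) (by omega) (by omega)).eq

end Aux


/-- `σ_i ↦ σ_{2i} σ_{2i+1} σ_{2i-1}⁻¹ σ_{2i}⁻¹` extends to a group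
homomorphism `Φ : B_n → B_{2n}`. -/
theorem stmt0 (n : ℕ) (hn : 2 ≤ n) :
    ∃ Φ : BraidGroup n →* BraidGroup (2 * n),
      ∀ i : ℕ, 1 ≤ i → i ≤ n - 1 →
        Φ (bσ n i) = bσ (2 * n) (2 * i) * bσ (2 * n) (2 * i + 1) *
          (bσ (2 * n) (2 * i - 1))⁻¹ * (bσ (2 * n) (2 * i))⁻¹ := by
  refine ⟨PresentedGroup.toGroup (Fmap_rels n hn), ?_⟩
  intro i h1 h2
  have h3 : (PresentedGroup.toGroup (Fmap_rels n hn)) (bσ n i) = Fmap n i :=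
    PresentedGroup.toGroup.of (Fmap_rels n hn)
  rw [h3, Fmap_in n i h1 h2]
end
end

section
/- Let R be a commutative ring with invertible elements q, r ∈ R and an element δ ∈ R with (q−1)·δ = r−1. Then there exists an R-algebra homomorphism π from the q-Brauer algebra Br_3(r,q) to the algebra of 3×3 matrices over R determined by π(g_1) = [[q,0,0],[0,0,q],[0,1,q−1]], π(g_2) = [[0,q,0],[1,q−1,0],[0,0,q]], and π(e) = [[δ,r,rq],[0,0,0],[0,0,0]]; that is, these three matrices satisfy all the defining relations of Br_3(r,q). -/
noncomputable section

namespace qB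

/-- Generators of the q-Brauer algebra: `g i` (intended for `1 ≤ i ≤ n-1`) and `e`. -/
inductive BrGen : Type
  | g : ℕ → BrGen
  | e : BrGen

/-- The generator `g i` inside the free algebra. -/
def fg (R : Type) [CommRing R] (i : ℕ) : FreeAlgebra R BrGen := FreeAlgebra.ι R (BrGen.g i)

/-- The generator `e` inside the free algebra. -/
def fe (R : Type) [CommRing R] : FreeAlgebra R BrGen := FreeAlgebra.ι R BrGen.e

/-- The element `g i ⁻¹ = q⁻¹ g i + (q⁻¹ - 1)·1` inside the free algebra (`qi = q⁻¹`). -/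
def fgInv (R : Type) [CommRing R] (qi : R) (i : ℕ) : FreeAlgebra R BrGen :=
  qi • fg R i + (qi - 1) • (1 : FreeAlgebra R BrGen)

/-- The word `g 2 * g 3 * (g 1)⁻¹ * (g 2)⁻¹`. -/
def fE2w (R : Type) [CommRing R] (qi : R) : FreeAlgebra R BrGen :=
  fg R 2 * fg R 3 * fgInv R qi 1 * fgInv R qi 2

/-- Defining relations of the q-Brauer algebra `Br_n(r,q)`; out-of-range generators are
killed (relation `zero`), so the algebra is presented exactly on `g 1, …, g (n-1), e`. -/
inductive BrRel (R : Type) [CommRing R] (n : ℕ) (q qi r δ : R) :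
    FreeAlgebra R BrGen → FreeAlgebra R BrGen → Prop
  | zero (i : ℕ) (h : i = 0 ∨ n ≤ i) : BrRel R n q qi r δ (fg R i) 0
  | quad (i : ℕ) (h1 : 1 ≤ i) (h2 : i < n) :
      BrRel R n q qi r δ (fg R i * fg R i)
        ((q - 1) • fg R i + q • (1 : FreeAlgebra R BrGen))
  | comm (i j : ℕ) (h1 : 1 ≤ i) (h2 : i + 1 < j) (h3 : j < n) :
      BrRel R n q qi r δ (fg R i * fg R j) (fg R j * fg R i)
  | braid (i : ℕ) (h1 : 1 ≤ i) (h2 : i + 1 < n) :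
      BrRel R n q qi r δ (fg R i * fg R (i + 1) * fg R i)
        (fg R (i + 1) * fg R i * fg R (i + 1))
  | e1 : BrRel R n q qi r δ (fe R * fe R) (δ • fe R)
  | e2comm (i : ℕ) (h1 : 3 ≤ i) (h2 : i < n) :
      BrRel R n q qi r δ (fe R * fg R i) (fg R i * fe R)
  | e2g1 (h : 2 ≤ n) : BrRel R n q qi r δ (fe R * fg R 1) (q • fe R)
  | e2g2 (h : 3 ≤ n) : BrRel R n q qi r δ (fe R * fg R 2 * fe R) (r • fe R)
  | e2g2inv (h : 3 ≤ n) : BrRel R n q qi r δ (fe R * fgInv R qi 2 * fe R) (qi • fe R)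
  | e3l (h : 4 ≤ n) :
      BrRel R n q qi r δ (fE2w R qi * (fe R * fE2w R qi * fe R)) (fe R * fE2w R qi * fe R)
  | e3r (h : 4 ≤ n) :
      BrRel R n q qi r δ ((fe R * fE2w R qi * fe R) * fE2w R qi) (fe R * fE2w R qi * fe R)

/-- The q-Brauer algebra `Br_n(r,q)` over `R`, with `qi = q⁻¹` and `δ = (r-1)/(q-1)`. -/
abbrev QBr (R : Type) [CommRing R] (n : ℕ) (q qi r δ : R) : Type :=
  RingQuot (BrRel R n q qi r δ)

/-- The generator `g i` of the q-Brauer algebra. -/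
def G (R : Type) [CommRing R] (n : ℕ) (q qi r δ : R) (i : ℕ) : QBr R n q qi r δ :=
  RingQuot.mkAlgHom R (BrRel R n q qi r δ) (fg R i)

/-- The generator `e` of the q-Brauer algebra. -/
def E (R : Type) [CommRing R] (n : ℕ) (q qi r δ : R) : QBr R n q qi r δ :=
  RingQuot.mkAlgHom R (BrRel R n q qi r δ) (fe R)

/-- The inverse `(g i)⁻¹ = q⁻¹ g i + (q⁻¹-1)` of the generator `g i`. -/
def GInv (R : Type) [CommRing R] (n : ℕ) (q qi r δ : R) (i : ℕ) : QBr R n q qi r δ :=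
  RingQuot.mkAlgHom R (BrRel R n q qi r δ) (fgInv R qi i)

/-- Ascending product `g a * g (a+1) * ⋯ * g b` (equal to `1` when `b < a`). -/
def ga (R : Type) [CommRing R] (n : ℕ) (q qi r δ : R) (a b : ℕ) : QBr R n q qi r δ :=
  ((List.range' a (b + 1 - a)).map (G R n q qi r δ)).prod

/-- Ascending product of inverses `(g a)⁻¹ * (g (a+1))⁻¹ * ⋯ * (g b)⁻¹`. -/
def gaInv (R : Type) [CommRing R] (n : ℕ) (q qi r δ : R) (a b : ℕ) : QBr R n q qi r δ :=
  ((List.range' a (b + 1 - a)).map (GInv R n q qi r δ)).prod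

/-- Descending product `g a * g (a-1) * ⋯ * g b` (equal to `1` when `a < b`). -/
def gd (R : Type) [CommRing R] (n : ℕ) (q qi r δ : R) (a b : ℕ) : QBr R n q qi r δ :=
  ((List.range' b (a + 1 - b)).reverse.map (G R n q qi r δ)).prod

/-- Descending product of inverses `(g a)⁻¹ * (g (a-1))⁻¹ * ⋯ * (g b)⁻¹`. -/
def gdInv (R : Type) [CommRing R] (n : ℕ) (q qi r δ : R) (a b : ℕ) : QBr R n q qi r δ :=
  ((List.range' b (a + 1 - b)).reverse.map (GInv R n q qi r δ)).prod

/-- The elements `e_(k)`: `e_(0) = 1`, `e_(1) = e`,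
`e_(k+1) = e * (g 2 ⋯ g (2k+1)) * (g 1)⁻¹ ⋯ (g 2k)⁻¹ * e_(k)`. -/
def ek (R : Type) [CommRing R] (n : ℕ) (q qi r δ : R) : ℕ → QBr R n q qi r δ
  | 0 => 1
  | k + 1 => E R n q qi r δ * ga R n q qi r δ 2 (2 * k + 1) *
      gaInv R n q qi r δ 1 (2 * k) * ek R n q qi r δ k

end qB


set_option maxHeartbeats 1000000 in
open qB in
/-- the 3×3 matrix representation of the q-Brauer algebra `Br_3(r,q)`. -/
theorem stmt4 (R : Type) [CommRing R] (q qi r ri δ : R)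
    (hq : q * qi = 1) (hr : r * ri = 1) (hδ : (q - 1) * δ = r - 1) :
    ∃ π : QBr R 3 q qi r δ →ₐ[R] Matrix (Fin 3) (Fin 3) R,
      π (G R 3 q qi r δ 1) = !![q, 0, 0; 0, 0, q; 0, 1, q - 1] ∧
      π (G R 3 q qi r δ 2) = !![0, q, 0; 1, q - 1, 0; 0, 0, q] ∧
      π (E R 3 q qi r δ) = !![δ, r, r * q; 0, 0, 0; 0, 0, 0] := by
  classical
  let M1 : Matrix (Fin 3) (Fin 3) R := !![q, 0, 0; 0, 0, q; 0, 1, q - 1]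
  let M2 : Matrix (Fin 3) (Fin 3) R := !![0, q, 0; 1, q - 1, 0; 0, 0, q]
  let Me : Matrix (Fin 3) (Fin 3) R := !![δ, r, r * q; 0, 0, 0; 0, 0, 0]
  have hM1 : M1 = !![q, 0, 0; 0, 0, q; 0, 1, q - 1] := rfl
  have hM2 : M2 = !![0, q, 0; 1, q - 1, 0; 0, 0, q] := rfl
  have hMe : Me = !![δ, r, r * q; 0, 0, 0; 0, 0, 0] := rfl
  let f : BrGen → Matrix (Fin 3) (Fin 3) R := fun x =>
    match x with
    | .g i => if i = 1 then M1 else if i = 2 then M2 else 0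
    | .e => Me
  let F : FreeAlgebra R BrGen →ₐ[R] Matrix (Fin 3) (Fin 3) R := FreeAlgebra.lift R f
  have hFg : ∀ i, F (fg R i) = if i = 1 then M1 else if i = 2 then M2 else 0 := by
    intro i; simp [F, fg, f]
  have hFe : F (fe R) = Me := by simp [F, fe, f]
  have hFg1 : F (fg R 1) = M1 := by simp [hFg]
  have hFg2 : F (fg R 2) = M2 := by simp [hFg]
  have key : ∀ a b, BrRel R 3 q qi r δ a b → F a = F b := by
    intro a b hab
    induction hab with
    | zero i h =>
        have hi1 : i ≠ 1 := by omega
        have hi2 : i ≠ 2 := by omega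
        simp [hFg, hi1, hi2]
    | quad i h1 h2 =>
        interval_cases i <;>
          simp only [map_mul, map_add, map_smul, map_one, hFg1, hFg2, hM1, hM2] <;>
          ext a b <;> fin_cases a <;> fin_cases b <;>
          simp [Matrix.mul_apply, Fin.sum_univ_succ, Matrix.vecHead, Matrix.vecTail, Matrix.one_apply] <;> ring
    | comm i j h1 h2 h3 => omega
    | braid i h1 h2 =>
        have : i = 1 := by omega
        subst this
        rw [map_mul, map_mul, map_mul, map_mul, hFg1, hFg2, hM1, hM2]
        ext a b; fin_cases a <;> fin_cases b <;>
          simp [Matrix.mul_apply, Fin.sum_univ_succ, Matrix.vecHead, Matrix.vecTail] <;> ring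
    | e1 =>
        rw [map_mul, map_smul, hFe, hMe]
        ext a b; fin_cases a <;> fin_cases b <;>
          simp [Matrix.mul_apply, Fin.sum_univ_succ, Matrix.vecHead, Matrix.vecTail] <;> ring
    | e2comm i h1 h2 => omega
    | e2g1 h =>
        rw [map_mul, map_smul, hFe, hFg1, hM1, hMe]
        ext a b; fin_cases a <;> fin_cases b <;>
          simp [Matrix.mul_apply, Fin.sum_univ_succ, Matrix.vecHead, Matrix.vecTail] <;> ring
    | e2g2 h =>
        rw [map_mul, map_mul, map_smul, hFe, hFg2, hM2, hMe]
        ext a b; fin_cases a <;> fin_cases b <;>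
          simp [Matrix.mul_apply, Fin.sum_univ_succ, Matrix.vecHead, Matrix.vecTail] <;> ring
    | e2g2inv h =>
        have hF : F (fgInv R qi 2) =
            !![qi - 1, qi * q, 0; qi, qi * q - 1, 0; 0, 0, qi * q + qi - 1] := by
          have : F (fgInv R qi 2) = qi • M2 + (qi - 1) • 1 := by simp [fgInv, hFg2]
          rw [this, hM2]
          ext a b; fin_cases a <;> fin_cases b <;>
            simp [Matrix.one_apply] <;> ring
        have hc : δ * (qi - 1) + r * qi = qi := by linear_combination δ * hq - qi * hδ
        have hprod : Me * !![qi - 1, qi * q, 0; qi, qi * q - 1, 0; 0, 0, qi * q + qi - 1] *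
            Me = (δ * (qi - 1) + r * qi) • Me := by
          rw [hMe]
          ext a b; fin_cases a <;> fin_cases b <;>
            simp [Matrix.mul_apply, Fin.sum_univ_succ, Matrix.vecHead, Matrix.vecTail] <;> ring
        rw [map_mul, map_mul, map_smul, hFe, hF, hprod, hc]
    | e3l h => omega
    | e3r h => omega
  refine ⟨RingQuot.liftAlgHom R ⟨F, key⟩, ?_, ?_, ?_⟩ <;>
    simp [G, E, RingQuot.liftAlgHom_mkAlgHom_apply, hFg1, hFg2, hFe, hM1, hM2, hMe]
end
end

section
/- In the q-Brauer algebra Br_n(r,q), for all j, k with 1 ≤ j < k and 2k ≤ n, one has g_{2j−1} g_{2j} e_{(k)} = g_{2j+1} g_{2j} e_{(k)} and g_{2j−1}^{−1} g_{2j}^{−1} e_{(k)} = g_{2j+1}^{−1} g_{2j}^{−1} e_{(k)}. -/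
noncomputable section

namespace qBLemmas
open qB

section
variable (R : Type) [CommRing R] (n : ℕ) (q qi r δ : R)

local notation "GG" => G R n q qi r δ
local notation "GI" => GInv R n q qi r δ
local notation "EE" => E R n q qi r δ
local notation "gaa" => ga R n q qi r δ
local notation "gii" => gaInv R n q qi r δ
local notation "ekk" => ek R n q qi r δ

private lemma rel {x y} (h : BrRel R n q qi r δ x y) :
    RingQuot.mkAlgHom R (BrRel R n q qi r δ) x = RingQuot.mkAlgHom R (BrRel R n q qi r δ) y :=
  RingQuot.mkAlgHom_rel R h

lemma Gzero (i : ℕ) (h : i = 0 ∨ n ≤ i) : GG i = 0 := by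
  have := rel R n q qi r δ (BrRel.zero i h)
  simpa [G] using this

lemma Gquad (i : ℕ) (h1 : 1 ≤ i) (h2 : i < n) :
    GG i * GG i = (q - 1) • GG i + q • (1 : QBr R n q qi r δ) := by
  have := rel R n q qi r δ (BrRel.quad i h1 h2)
  simpa [G, map_mul, map_add, map_smul, map_one] using this

lemma Gcomm (i j : ℕ) (h : i + 1 < j) : GG i * GG j = GG j * GG i := by
  rcases Nat.eq_zero_or_pos i with hi | hi
  · rw [hi, Gzero R n q qi r δ 0 (Or.inl rfl), zero_mul, mul_zero]
  rcases lt_or_ge j n with hj | hj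
  · have := rel R n q qi r δ (BrRel.comm i j hi h hj)
    simpa [G, map_mul] using this
  · rw [Gzero R n q qi r δ j (Or.inr hj), zero_mul, mul_zero]

lemma Gbraid (i : ℕ) (h1 : 1 ≤ i) (h2 : i + 1 < n) :
    GG i * GG (i+1) * GG i = GG (i+1) * GG i * GG (i+1) := by
  have := rel R n q qi r δ (BrRel.braid i h1 h2)
  simpa [G, map_mul] using this

lemma Ee : EE * EE = δ • EE := by
  have := rel R n q qi r δ BrRel.e1
  simpa [E, map_mul, map_smul] using this

lemma EG3 (i : ℕ) (h : 3 ≤ i) : EE * GG i = GG i * EE := by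
  rcases lt_or_ge i n with hj | hj
  · have := rel R n q qi r δ (BrRel.e2comm i h hj)
    simpa [G, E, map_mul] using this
  · rw [Gzero R n q qi r δ i (Or.inr hj), zero_mul, mul_zero]

lemma EG1 (h : 2 ≤ n) : EE * GG 1 = q • EE := by
  have := rel R n q qi r δ (BrRel.e2g1 h)
  simpa [G, E, map_mul, map_smul] using this

lemma EG2E (h : 3 ≤ n) : EE * GG 2 * EE = r • EE := by
  have := rel R n q qi r δ (BrRel.e2g2 h)
  simpa [G, E, map_mul, map_smul] using this

lemma EG2iE (h : 3 ≤ n) : EE * GI 2 * EE = qi • EE := by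
  have := rel R n q qi r δ (BrRel.e2g2inv h)
  simpa [G, E, GInv, map_mul, map_smul] using this

lemma E3l (h : 4 ≤ n) :
    (GG 2 * GG 3 * GI 1 * GI 2) * (EE * (GG 2 * GG 3 * GI 1 * GI 2) * EE) =
      EE * (GG 2 * GG 3 * GI 1 * GI 2) * EE := by
  have := rel R n q qi r δ (BrRel.e3l h)
  simpa [G, E, GInv, fE2w, map_mul] using this

lemma GInv_def (i : ℕ) : GI i = qi • GG i + (qi - 1) • (1 : QBr R n q qi r δ) := by
  simp [GInv, G, fgInv, map_add, map_smul, map_one]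

end
end qBLemmas
namespace qBLemmas
open qB

section
variable (R : Type) [CommRing R] (n : ℕ) (q qi r δ : R)

local notation "GG" => G R n q qi r δ
local notation "GI" => GInv R n q qi r δ
local notation "EE" => E R n q qi r δ
local notation "gaa" => ga R n q qi r δ
local notation "gii" => gaInv R n q qi r δ
local notation "ekk" => ek R n q qi r δ

-- x-augmented (right-associated) rewriting forms
lemma quadx (i : ℕ) (h1 : 1 ≤ i) (h2 : i < n) (x : QBr R n q qi r δ) :
    GG i * (GG i * x) = (q - 1) • (GG i * x) + q • x := by
  rw [← mul_assoc, Gquad R n q qi r δ i h1 h2, add_mul, smul_mul_assoc, smul_mul_assoc, one_mul]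

lemma commx (i j : ℕ) (h : i + 1 < j) (x : QBr R n q qi r δ) :
    GG i * (GG j * x) = GG j * (GG i * x) := by
  rw [← mul_assoc, Gcomm R n q qi r δ i j h, mul_assoc]

lemma braidx (i : ℕ) (h1 : 1 ≤ i) (h2 : i + 1 < n) (x : QBr R n q qi r δ) :
    GG i * (GG (i+1) * (GG i * x)) = GG (i+1) * (GG i * (GG (i+1) * x)) := by
  rw [← mul_assoc, ← mul_assoc, Gbraid R n q qi r δ i h1 h2, mul_assoc, mul_assoc]

lemma Eex (x : QBr R n q qi r δ) : EE * (EE * x) = δ • (EE * x) := by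
  rw [← mul_assoc, Ee, smul_mul_assoc]

lemma EG3x (i : ℕ) (h : 3 ≤ i) (x : QBr R n q qi r δ) : EE * (GG i * x) = GG i * (EE * x) := by
  rw [← mul_assoc, EG3 R n q qi r δ i h, mul_assoc]

lemma EG1x (h : 2 ≤ n) (x : QBr R n q qi r δ) : EE * (GG 1 * x) = q • (EE * x) := by
  rw [← mul_assoc, EG1 R n q qi r δ h, smul_mul_assoc]

lemma EG2Ex (h : 3 ≤ n) (x : QBr R n q qi r δ) :
    EE * (GG 2 * (EE * x)) = r • (EE * x) := by
  rw [← mul_assoc, ← mul_assoc, EG2E R n q qi r δ h, smul_mul_assoc]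

lemma EG2iEx (h : 3 ≤ n) (x : QBr R n q qi r δ) :
    EE * (GI 2 * (EE * x)) = qi • (EE * x) := by
  rw [← mul_assoc, ← mul_assoc, EG2iE R n q qi r δ h, smul_mul_assoc]

lemma E3lx (h : 4 ≤ n) (x : QBr R n q qi r δ) :
    GG 2 * (GG 3 * (GI 1 * (GI 2 * (EE * (GG 2 * (GG 3 * (GI 1 * (GI 2 * (EE * x))))))))) =
      EE * (GG 2 * (GG 3 * (GI 1 * (GI 2 * (EE * x))))) := by
  have h0 := congrArg (· * x) (E3l R n q qi r δ h)
  simpa only [mul_assoc] using h0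

lemma GImulx (i : ℕ) (x : QBr R n q qi r δ) :
    GI i * x = qi • (GG i * x) + (qi - 1) • x := by
  rw [GInv_def, add_mul, smul_mul_assoc, smul_mul_assoc, one_mul]

-- commutation variants with inverses
lemma GcommIR (i j : ℕ) (h : i + 1 < j) : GG i * GI j = GI j * GG i := by
  rw [GInv_def, mul_add, add_mul, mul_smul_comm, smul_mul_assoc, mul_smul_comm, smul_mul_assoc,
    one_mul, mul_one, Gcomm R n q qi r δ i j h]

lemma GIcommL (i j : ℕ) (h : i + 1 < j) : GI i * GG j = GG j * GI i := by
  rw [GInv_def, mul_add, add_mul, mul_smul_comm, smul_mul_assoc, mul_smul_comm, smul_mul_assoc,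
    one_mul, mul_one, Gcomm R n q qi r δ i j h]

lemma GIcommI (i j : ℕ) (h : i + 1 < j) : GI i * GI j = GI j * GI i := by
  rw [GInv_def R n q qi r δ i, mul_add, add_mul, mul_smul_comm, smul_mul_assoc, mul_smul_comm, smul_mul_assoc,
    one_mul, mul_one, GcommIR R n q qi r δ i j h]

lemma EcommI (i : ℕ) (h : 3 ≤ i) : EE * GI i = GI i * EE := by
  rw [GInv_def, mul_add, add_mul, mul_smul_comm, smul_mul_assoc, mul_smul_comm, smul_mul_assoc,
    one_mul, mul_one, EG3 R n q qi r δ i h]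

lemma EGIx (i : ℕ) (h : 3 ≤ i) (x : QBr R n q qi r δ) : EE * (GI i * x) = GI i * (EE * x) := by
  rw [← mul_assoc, EcommI R n q qi r δ i h, mul_assoc]


variable (hq : q * qi = 1)
include hq

lemma GmulGI (i : ℕ) (h1 : 1 ≤ i) (h2 : i < n) : GG i * GI i = 1 := by
  rw [GInv_def, mul_add, mul_smul_comm, mul_smul_comm, Gquad R n q qi r δ i h1 h2, mul_one]
  match_scalars
  · linear_combination hq
  · linear_combination hq

lemma GImulG (i : ℕ) (h1 : 1 ≤ i) (h2 : i < n) : GI i * GG i = 1 := by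
  rw [GInv_def, add_mul, smul_mul_assoc, smul_mul_assoc, one_mul,
    Gquad R n q qi r δ i h1 h2]
  match_scalars
  · linear_combination hq
  · linear_combination hq

lemma Gclx (i : ℕ) (h1 : 1 ≤ i) (h2 : i < n) (x : QBr R n q qi r δ) :
    GG i * (GI i * x) = x := by
  rw [← mul_assoc, GmulGI R n q qi r δ hq i h1 h2, one_mul]

lemma GIclx (i : ℕ) (h1 : 1 ≤ i) (h2 : i < n) (x : QBr R n q qi r δ) :
    GI i * (GG i * x) = x := by
  rw [← mul_assoc, GImulG R n q qi r δ hq i h1 h2, one_mul]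

/-- `g_{i+1} g_i^{-1} g_{i+1}^{-1} = g_i^{-1} g_{i+1}^{-1} g_i` (x-form). -/
lemma bd1x (i : ℕ) (h1 : 1 ≤ i) (h2 : i + 1 < n) (x : QBr R n q qi r δ) :
    GG (i+1) * (GI i * (GI (i+1) * x)) = GI i * (GI (i+1) * (GG i * x)) := by
  have hiN : i < n := by omega
  have h1N : 1 ≤ i + 1 := by omega
  have F1 : ∀ y : QBr R n q qi r δ,
      GG i * y = GG (i+1) * (GG i * (GG (i+1) * (GI i * (GI (i+1) * y)))) := by
    intro y
    have hb := braidx R n q qi r δ i h1 h2 (GI i * (GI (i+1) * y))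
    rw [Gclx R n q qi r δ hq i h1 hiN, Gclx R n q qi r δ hq (i+1) h1N h2] at hb
    exact hb
  have F2 : ∀ y : QBr R n q qi r δ,
      GI (i+1) * (GG i * y) = GG i * (GG (i+1) * (GI i * (GI (i+1) * y))) := by
    intro y
    have := congrArg (fun z => GI (i+1) * z) (F1 y)
    simpa only [GIclx R n q qi r δ hq (i+1) h1N h2] using this
  have F3 := congrArg (fun z => GI i * z) (F2 x)
  simpa only [GIclx R n q qi r δ hq i h1 hiN] using F3.symm

/-- `e g_1^{-1} = q^{-1} e` (x-form). -/
lemma EGi1x (h : 2 ≤ n) (x : QBr R n q qi r δ) : EE * (GI 1 * x) = qi • (EE * x) := by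
  rw [GImulx, mul_add, mul_smul_comm, mul_smul_comm, EG1x R n q qi r δ h]
  match_scalars
  linear_combination hq
end
end qBLemmas
namespace qBLemmas
open qB

section
variable (R : Type) [CommRing R] (n : ℕ) (q qi r δ : R)

local notation "GG" => G R n q qi r δ
local notation "GI" => GInv R n q qi r δ
local notation "EE" => E R n q qi r δ
local notation "gaa" => ga R n q qi r δ
local notation "gii" => gaInv R n q qi r δ
local notation "ekk" => ek R n q qi r δ

lemma ga_concat (a b : ℕ) (h : a ≤ b + 1) : gaa a (b+1) = gaa a b * GG (b+1) := by
  unfold ga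
  have h1 : b + 1 + 1 - a = (b + 1 - a) + 1 := by omega
  rw [h1, List.range'_concat]
  have h2 : a + 1 * (b + 1 - a) = b + 1 := by omega
  rw [h2, List.map_append, List.prod_append, List.map_singleton, List.prod_singleton]

lemma ga_cons (a b : ℕ) (h : a ≤ b) : gaa a b = GG a * gaa (a+1) b := by
  unfold ga
  have h1 : b + 1 - a = (b + 1 - (a+1)) + 1 := by omega
  rw [h1, List.range'_succ, List.map_cons, List.prod_cons]

lemma ga_single (a : ℕ) : gaa a a = GG a := by
  unfold ga
  have h1 : a + 1 - a = 1 := by omega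
  rw [h1]
  simp [List.range']

lemma gii_concat (a b : ℕ) (h : a ≤ b + 1) : gii a (b+1) = gii a b * GI (b+1) := by
  unfold gaInv
  have h1 : b + 1 + 1 - a = (b + 1 - a) + 1 := by omega
  rw [h1, List.range'_concat]
  have h2 : a + 1 * (b + 1 - a) = b + 1 := by omega
  rw [h2, List.map_append, List.prod_append, List.map_singleton, List.prod_singleton]

lemma gii_cons (a b : ℕ) (h : a ≤ b) : gii a b = GI a * gii (a+1) b := by
  unfold gaInv
  have h1 : b + 1 - a = (b + 1 - (a+1)) + 1 := by omega
  rw [h1, List.range'_succ, List.map_cons, List.prod_cons]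

lemma gii_single (a : ℕ) : gii a a = GI a := by
  unfold gaInv
  have h1 : a + 1 - a = 1 := by omega
  rw [h1]
  simp [List.range']

private lemma listprod_comm {A : Type} [Ring A] (f : ℕ → A) (y : A) :
    ∀ l : List ℕ, (∀ m ∈ l, f m * y = y * f m) → (l.map f).prod * y = y * (l.map f).prod := by
  intro l
  induction l with
  | nil => simp
  | cons hd tl ih =>
    intro h
    rw [List.map_cons, List.prod_cons, mul_assoc, ih (fun m hm => h m (List.mem_cons_of_mem hd hm)),
      ← mul_assoc, h hd List.mem_cons_self, mul_assoc]

lemma ga_comm (a b : ℕ) (y : QBr R n q qi r δ)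
    (h : ∀ m, a ≤ m → m ≤ b → GG m * y = y * GG m) : gaa a b * y = y * gaa a b := by
  apply listprod_comm
  intro m hm
  rw [List.mem_range'_1] at hm
  exact h m (by omega) (by omega)

lemma gii_comm (a b : ℕ) (y : QBr R n q qi r δ)
    (h : ∀ m, a ≤ m → m ≤ b → GI m * y = y * GI m) : gii a b * y = y * gii a b := by
  apply listprod_comm
  intro m hm
  rw [List.mem_range'_1] at hm
  exact h m (by omega) (by omega)

/-- Transport base case: `(g_a ⋯ g_{i+1}) g_i = g_{i+1} (g_a ⋯ g_{i+1})`. -/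
lemma T1b (a i : ℕ) (ha : 1 ≤ a) (hi : a ≤ i) (hin : i + 1 < n) :
    gaa a (i+1) * GG i = GG (i+1) * gaa a (i+1) := by
  obtain ⟨d, rfl⟩ := Nat.exists_eq_add_of_le hi
  cases d with
  | zero =>
    rw [ga_concat R n q qi r δ a a (by omega), ga_single, ← mul_assoc]
    exact Gbraid R n q qi r δ a ha (by omega)
  | succ d =>
    show gaa a (a+d+1+1) * GG (a+d+1) = GG (a+d+1+1) * gaa a (a+d+1+1)
    have e1 : gaa a (a+d+1+1) = gaa a (a+d) * GG (a+d+1) * GG (a+d+1+1) := by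
      rw [ga_concat R n q qi r δ a (a+d+1) (by omega), ga_concat R n q qi r δ a (a+d) (by omega)]
    have hcomm : gaa a (a+d) * GG (a+d+1+1) = GG (a+d+1+1) * gaa a (a+d) := by
      apply ga_comm
      intro m hm1 hm2
      exact Gcomm R n q qi r δ m (a+d+1+1) (by omega)
    have hbr := Gbraid R n q qi r δ (a+d+1) (by omega) hin
    calc gaa a (a+d+1+1) * GG (a+d+1)
        = gaa a (a+d) * (GG (a+d+1) * GG (a+d+1+1) * GG (a+d+1)) := by
          rw [e1]; simp only [mul_assoc]
      _ = gaa a (a+d) * (GG (a+d+1+1) * GG (a+d+1) * GG (a+d+1+1)) := by rw [hbr]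
      _ = gaa a (a+d) * GG (a+d+1+1) * (GG (a+d+1) * GG (a+d+1+1)) := by
          simp only [mul_assoc]
      _ = GG (a+d+1+1) * gaa a (a+d+1+1) := by
          rw [hcomm, e1]; simp only [mul_assoc]

variable (hq : q * qi = 1)
include hq

/-- Transport base case, inverse product version. -/
lemma T2b (a i : ℕ) (ha : 1 ≤ a) (hi : a ≤ i) (hin : i + 1 < n) :
    gii a (i+1) * GG i = GG (i+1) * gii a (i+1) := by
  have bd1p : ∀ j, 1 ≤ j → j + 1 < n →
      GI j * GI (j+1) * GG j = GG (j+1) * (GI j * GI (j+1)) := by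
    intro j hj1 hj2
    have := bd1x R n q qi r δ hq j hj1 hj2 1
    simp only [mul_one] at this
    rw [mul_assoc]
    exact this.symm
  obtain ⟨d, rfl⟩ := Nat.exists_eq_add_of_le hi
  cases d with
  | zero =>
    rw [gii_concat R n q qi r δ a a (by omega), gii_single]
    exact bd1p a ha (by omega)
  | succ d =>
    show gii a (a+d+1+1) * GG (a+d+1) = GG (a+d+1+1) * gii a (a+d+1+1)
    have e1 : gii a (a+d+1+1) = gii a (a+d) * GI (a+d+1) * GI (a+d+1+1) := by
      rw [gii_concat R n q qi r δ a (a+d+1) (by omega), gii_concat R n q qi r δ a (a+d) (by omega)]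
    have hcomm : gii a (a+d) * GG (a+d+1+1) = GG (a+d+1+1) * gii a (a+d) := by
      apply gii_comm
      intro m hm1 hm2
      exact GIcommL R n q qi r δ m (a+d+1+1) (by omega)
    have hbr := bd1p (a+d+1) (by omega) hin
    calc gii a (a+d+1+1) * GG (a+d+1)
        = gii a (a+d) * (GI (a+d+1) * GI (a+d+1+1) * GG (a+d+1)) := by
          rw [e1]; simp only [mul_assoc]
      _ = gii a (a+d) * (GG (a+d+1+1) * (GI (a+d+1) * GI (a+d+1+1))) := by rw [hbr]
      _ = gii a (a+d) * GG (a+d+1+1) * (GI (a+d+1) * GI (a+d+1+1)) := by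
          simp only [mul_assoc]
      _ = GG (a+d+1+1) * gii a (a+d+1+1) := by
          rw [hcomm, e1]; simp only [mul_assoc]

omit hq in
/-- Transport: `(g_a ⋯ g_b) g_i = g_{i+1} (g_a ⋯ g_b)` for `a ≤ i < b < n`. -/
lemma T1 (a b i : ℕ) (ha : 1 ≤ a) (hbn : b < n) (hi : a ≤ i) (hib : i < b) :
    gaa a b * GG i = GG (i+1) * gaa a b := by
  induction b, hib using Nat.le_induction with
  | base => exact T1b R n q qi r δ a i ha hi hbn
  | succ b hb IH =>
    rw [ga_concat R n q qi r δ a b (by omega), mul_assoc,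
      ← Gcomm R n q qi r δ i (b+1) (by omega), ← mul_assoc, IH (by omega), mul_assoc]

/-- Transport: `(g_a^{-1} ⋯ g_b^{-1}) g_i = g_{i+1} (g_a^{-1} ⋯ g_b^{-1})`. -/
lemma T2 (a b i : ℕ) (ha : 1 ≤ a) (hbn : b < n) (hi : a ≤ i) (hib : i < b) :
    gii a b * GG i = GG (i+1) * gii a b := by
  induction b, hib using Nat.le_induction with
  | base => exact T2b R n q qi r δ hq a i ha hi hbn
  | succ b hb IH =>
    rw [gii_concat R n q qi r δ a b (by omega), mul_assoc,
      ← GcommIR R n q qi r δ i (b+1) (by omega), ← mul_assoc, IH (by omega), mul_assoc]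

omit hq in
lemma T1x (a b i : ℕ) (ha : 1 ≤ a) (hbn : b < n) (hi : a ≤ i) (hib : i < b)
    (x : QBr R n q qi r δ) : GG (i+1) * (gaa a b * x) = gaa a b * (GG i * x) := by
  rw [← mul_assoc, ← T1 R n q qi r δ a b i ha hbn hi hib, mul_assoc]

lemma T2x (a b i : ℕ) (ha : 1 ≤ a) (hbn : b < n) (hi : a ≤ i) (hib : i < b)
    (x : QBr R n q qi r δ) : GG (i+1) * (gii a b * x) = gii a b * (GG i * x) := by
  rw [← mul_assoc, ← T2 R n q qi r δ hq a b i ha hbn hi hib, mul_assoc]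

lemma T1ix (a b i : ℕ) (ha : 1 ≤ a) (hbn : b < n) (hi : a ≤ i) (hib : i < b)
    (x : QBr R n q qi r δ) : GI (i+1) * (gaa a b * x) = gaa a b * (GI i * x) := by
  rw [GImulx, GImulx, mul_add, mul_smul_comm, mul_smul_comm,
    T1x R n q qi r δ a b i ha hbn hi hib]

lemma T2ix (a b i : ℕ) (ha : 1 ≤ a) (hbn : b < n) (hi : a ≤ i) (hib : i < b)
    (x : QBr R n q qi r δ) : GI (i+1) * (gii a b * x) = gii a b * (GI i * x) := by
  rw [GImulx, GImulx, mul_add, mul_smul_comm, mul_smul_comm,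
    T2x R n q qi r δ hq a b i ha hbn hi hib]

omit hq in
lemma Egax (a b : ℕ) (h3 : 3 ≤ a) (x : QBr R n q qi r δ) :
    EE * (gaa a b * x) = gaa a b * (EE * x) := by
  rw [← mul_assoc, ← ga_comm R n q qi r δ a b _ (fun m hm1 _ => (EG3 R n q qi r δ m (by omega)).symm),
    mul_assoc]

omit hq in
lemma Egiix (a b : ℕ) (h3 : 3 ≤ a) (x : QBr R n q qi r δ) :
    EE * (gii a b * x) = gii a b * (EE * x) := by
  rw [← mul_assoc, ← gii_comm R n q qi r δ a b _ (fun m hm1 _ => (EcommI R n q qi r δ m (by omega)).symm),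
    mul_assoc]

omit hq in
lemma gaComm_GIx (a b j : ℕ) (h : j + 1 < a) (x : QBr R n q qi r δ) :
    gaa a b * (GI j * x) = GI j * (gaa a b * x) := by
  rw [← mul_assoc, ga_comm R n q qi r δ a b _ (fun m hm1 _ => (GIcommL R n q qi r δ j m (by omega)).symm),
    mul_assoc]

end
end qBLemmas
namespace qBLemmas
open qB

section
variable (R : Type) [CommRing R] (n : ℕ) (q qi r δ : R)

local notation "GG" => G R n q qi r δ
local notation "GI" => GInv R n q qi r δ
local notation "EE" => E R n q qi r δ
local notation "WW" y => G R n q qi r δ 2 * (G R n q qi r δ 3 *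
  (GInv R n q qi r δ 1 * (GInv R n q qi r δ 2 * y)))
local notation "EX" x => E R n q qi r δ * (G R n q qi r δ 2 * (G R n q qi r δ 3 *
  (GInv R n q qi r δ 1 * (GInv R n q qi r δ 2 * (E R n q qi r δ * x)))))

variable (hq : q * qi = 1)
include hq

lemma qcancel {x y : QBr R n q qi r δ} (h : qi • x = qi • y) : x = y := by
  have h2 := congrArg (fun z => q • z) h
  simpa only [smul_smul, hq, one_smul] using h2

omit hq in
/-- notation form of (E3): `W e_(2)-pattern = e_(2)-pattern`. -/
lemma E3lW (h4 : 4 ≤ n) (x : QBr R n q qi r δ) : (WW (EX x)) = EX x :=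
  E3lx R n q qi r δ h4 x

omit hq in
lemma key1 (h4 : 4 ≤ n) (x : QBr R n q qi r δ) :
    EE * (GG 2 * (WW (EE * (WW (EE * x))))) = r • (EX x) := by
  rw [E3lx R n q qi r δ h4 x, EG2Ex R n q qi r δ (by omega)]

lemma key2 (h4 : 4 ≤ n) (x : QBr R n q qi r δ) :
    EE * (GG 2 * (WW (EE * (WW (EE * x))))) =
      ((q-1)*δ) • (EX x) + (q*qi*qi) • (GG 3 * (EX x)) := by
  rw [quadx R n q qi r δ 2 (by omega) (by omega), mul_add, mul_smul_comm, mul_smul_comm,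
    E3lx R n q qi r δ h4 x, Eex, EG3x R n q qi r δ 3 (by omega),
    EGi1x R n q qi r δ hq (by omega), EG2iEx R n q qi r δ (by omega)]
  rw [mul_smul_comm, mul_smul_comm]
  rw [smul_smul, smul_smul, smul_smul]

/-- `g_3 e_(2) = q e_(2)` (x-form). -/
lemma ce2x (hδ : (q - 1) * δ = r - 1) (h4 : 4 ≤ n) (x : QBr R n q qi r δ) :
    GG 3 * (EX x) = q • (EX x) := by
  have hk : r • (EX x) = ((q-1)*δ) • (EX x) + (q*qi*qi) • (GG 3 * (EX x)) :=
    (key1 R n q qi r δ h4 x).symm.trans (key2 R n q qi r δ hq h4 x)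
  have h8 : (q*(q*qi*qi)) • (GG 3 * (EX x)) = (q*r - q*((q-1)*δ)) • (EX x) := by
    have h7 := congrArg (fun z => q • z) hk
    simp only [smul_add, smul_smul] at h7
    have h8' := eq_sub_of_add_eq' h7.symm
    rw [← sub_smul] at h8'
    exact h8'
  have h9 : q*(q*qi*qi) = 1 := by linear_combination (q*qi + 1) * hq
  have h10 : q*r - q*((q-1)*δ) = q := by linear_combination (-q) * hδ
  rw [h9, h10, one_smul] at h8
  exact h8

lemma cWx (h4 : 4 ≤ n) (y : QBr R n q qi r δ) : GG 3 * (WW y) = WW (GG 1 * y) := by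
  rw [← braidx R n q qi r δ 2 (by omega) (by omega),
    bd1x R n q qi r δ hq 1 (by omega) (by omega)]

lemma VWx (h4 : 4 ≤ n) (y : QBr R n q qi r δ) :
    GG 2 * (GG 1 * (GI 3 * (GI 2 * (WW y)))) = y := by
  rw [GIclx R n q qi r δ hq 2 (by omega) (by omega),
    GIclx R n q qi r δ hq 3 (by omega) (by omega),
    Gclx R n q qi r δ hq 1 (by omega) (by omega),
    Gclx R n q qi r δ hq 2 (by omega) (by omega)]

/-- `g_1 e_(2) = q e_(2)` (x-form). -/
lemma ae2x (hδ : (q - 1) * δ = r - 1) (h4 : 4 ≤ n) (x : QBr R n q qi r δ) :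
    GG 1 * (EX x) = q • (EX x) := by
  have hWc : (WW (GG 1 * (EX x))) = q • (EX x) := by
    rw [← cWx R n q qi r δ hq h4, E3lW R n q qi r δ h4 x, ce2x R n q qi r δ hq hδ h4 x]
  have hV : GG 2 * (GG 1 * (GI 3 * (GI 2 * (q • (EX x))))) = q • (EX x) := by
    rw [mul_smul_comm, mul_smul_comm, mul_smul_comm, mul_smul_comm]
    congr 1
    conv_lhs => rw [← E3lW R n q qi r δ h4 x]
    exact VWx R n q qi r δ hq h4 (EX x)
  have h2 := congrArg (fun z => GG 2 * (GG 1 * (GI 3 * (GI 2 * z)))) hWc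
  rw [VWx R n q qi r δ hq h4, hV] at h2
  exact h2

/-- inverse version at `k = 2` (x-form). -/
lemma inv2x (h4 : 4 ≤ n) (x : QBr R n q qi r δ) :
    GI 1 * (GI 2 * (EX x)) = GI 3 * (GI 2 * (EX x)) := by
  conv_rhs => rw [← E3lW R n q qi r δ h4 x]
  rw [GIclx R n q qi r δ hq 2 (by omega) (by omega),
    GIclx R n q qi r δ hq 3 (by omega) (by omega)]

/-- plus version at `k = 2` (x-form). -/
lemma plus2x (hδ : (q - 1) * δ = r - 1) (h4 : 4 ≤ n) (x : QBr R n q qi r δ) :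
    GG 1 * (GG 2 * (EX x)) = GG 3 * (GG 2 * (EX x)) := by
  have hinv := inv2x R n q qi r δ hq h4 x
  rw [GImulx R n q qi r δ 1 (GI 2 * (EX x)), GImulx R n q qi r δ 3 (GI 2 * (EX x))] at hinv
  have h1 := add_right_cancel hinv
  have h2 : GG 1 * (GI 2 * (EX x)) = GG 3 * (GI 2 * (EX x)) :=
    qcancel R n q qi r δ hq h1
  rw [GImulx R n q qi r δ 2 (EX x), mul_add, mul_add, mul_smul_comm, mul_smul_comm,
    mul_smul_comm, mul_smul_comm, ae2x R n q qi r δ hq hδ h4 x,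
    ce2x R n q qi r δ hq hδ h4 x] at h2
  exact qcancel R n q qi r δ hq (add_right_cancel h2)

end
end qBLemmas
namespace qBLemmas
open qB

section
variable (R : Type) [CommRing R] (n : ℕ) (q qi r δ : R)

local notation "GG" => G R n q qi r δ
local notation "GI" => GInv R n q qi r δ
local notation "EE" => E R n q qi r δ
local notation "gaa" => ga R n q qi r δ
local notation "gii" => gaInv R n q qi r δ
local notation "ekk" => ek R n q qi r δ
local notation "EX" x => E R n q qi r δ * (G R n q qi r δ 2 * (G R n q qi r δ 3 *
  (GInv R n q qi r δ 1 * (GInv R n q qi r δ 2 * (E R n q qi r δ * x)))))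

lemma ek_succ_r (k : ℕ) : ekk (k+1) = EE * (gaa 2 (2*k+1) * (gii 1 (2*k) * ekk k)) := by
  simp only [ek, mul_assoc]

lemma ek1 : ekk 1 = EE := by
  have h := ek_succ_r R n q qi r δ 0
  norm_num at h
  rw [h]
  unfold ga gaInv
  norm_num [List.range']
  simp [ek]

lemma ek2 : ekk 2 = EX (1 : QBr R n q qi r δ) := by
  have h := ek_succ_r R n q qi r δ 1
  norm_num at h
  rw [h, ek1 R n q qi r δ, ga_cons R n q qi r δ 2 3 (by omega), ga_single,
    gii_cons R n q qi r δ 1 2 (by omega), gii_single, mul_one]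
  simp only [mul_assoc]

lemma ek_decomp (m : ℕ) (hn : 2*m+6 ≤ n) :
    ekk (m+3) = EX (gaa 4 (2*m+5) * (gii 3 (2*m+4) *
      (gaa 2 (2*m+3) * (gii 1 (2*m+2) * ekk (m+1))))) := by
  have h1 := ek_succ_r R n q qi r δ (m+2)
  have h2 := ek_succ_r R n q qi r δ (m+1)
  rw [show 2*(m+2)+1 = 2*m+5 by omega, show 2*(m+2) = 2*m+4 by omega,
    show m+2+1 = m+3 from rfl] at h1
  rw [show 2*(m+1)+1 = 2*m+3 by omega, show 2*(m+1) = 2*m+2 by omega,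
    show m+1+1 = m+2 from rfl] at h2
  rw [h2] at h1
  rw [ga_cons R n q qi r δ 2 (2*m+5) (by omega), ga_cons R n q qi r δ 3 (2*m+5) (by omega),
    gii_cons R n q qi r δ 1 (2*m+4) (by omega), gii_cons R n q qi r δ 2 (2*m+4) (by omega)] at h1
  simp only [mul_assoc] at h1
  norm_num at h1
  rw [gaComm_GIx R n q qi r δ 4 (2*m+5) 1 (by omega),
    gaComm_GIx R n q qi r δ 4 (2*m+5) 2 (by omega),
    ← Egiix R n q qi r δ 3 (2*m+4) (by omega),
    ← Egax R n q qi r δ 4 (2*m+5) (by omega)] at h1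
  exact h1

variable (hq : q * qi = 1) (hδ : (q - 1) * δ = r - 1)
include hq hδ

theorem mainPair : ∀ k, 2 ≤ k → 2*k ≤ n → ∀ j, 1 ≤ j → j < k →
    (GG (2*j-1) * (GG (2*j) * ekk k) = GG (2*j+1) * (GG (2*j) * ekk k)) ∧
    (GI (2*j-1) * (GI (2*j) * ekk k) = GI (2*j+1) * (GI (2*j) * ekk k)) := by
  intro k hk
  induction k, hk using Nat.le_induction with
  | base =>
    intro hn j hj1 hjk
    have hj : j = 1 := by omega
    subst hj
    norm_num
    rw [ek2 R n q qi r δ]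
    exact ⟨plus2x R n q qi r δ hq hδ (by omega) 1, inv2x R n q qi r δ hq (by omega) 1⟩
  | succ k hk2 IH =>
    intro hn j hj1 hjk
    have hn' : 2*k ≤ n := by omega
    rcases Nat.lt_or_ge j 2 with hj2 | hj2
    · -- j = 1 : use the decomposition through e_(2)
      have hj : j = 1 := by omega
      subst hj
      obtain ⟨m, rfl⟩ : ∃ m, k = m + 2 := ⟨k - 2, by omega⟩
      have hd := ek_decomp R n q qi r δ m (by omega)
      rw [show m+2+1 = m+3 from rfl]
      norm_num
      rw [hd]
      exact ⟨plus2x R n q qi r δ hq hδ (by omega) _, inv2x R n q qi r δ hq (by omega) _⟩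
    · -- j = l + 2 : transport through W_k and use the induction hypothesis
      obtain ⟨l, rfl⟩ : ∃ l, j = l + 2 := ⟨j - 2, by omega⟩
      have IH' := IH hn' (l+1) (by omega) (by omega)
      rw [show 2*(l+1)+1 = 2*l+3 by omega, show 2*(l+1)-1 = 2*l+1 by omega,
        show 2*(l+1) = 2*l+2 by omega] at IH'
      rw [show 2*(l+2)+1 = 2*l+5 by omega, show 2*(l+2)-1 = 2*l+3 by omega,
        show 2*(l+2) = 2*l+4 by omega, ek_succ_r R n q qi r δ k]
      have hT : ∀ iHi iLo, iHi = iLo + 2 → 1 ≤ iLo → iHi ≤ 2*k+1 →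
          ∀ x : QBr R n q qi r δ,
          GG iHi * (EE * (gaa 2 (2*k+1) * (gii 1 (2*k) * x))) =
            EE * (gaa 2 (2*k+1) * (gii 1 (2*k) * (GG iLo * x))) := by
        intro iHi iLo hEq hLo hHi x
        subst hEq
        rw [show iLo + 2 = (iLo+1)+1 from rfl,
          ← EG3x R n q qi r δ ((iLo+1)+1) (by omega),
          T1x R n q qi r δ 2 (2*k+1) (iLo+1) (by omega) (by omega) (by omega) (by omega),
          T2x R n q qi r δ hq 1 (2*k) iLo (by omega) (by omega) (by omega) (by omega)]
      have hTi : ∀ iHi iLo, iHi = iLo + 2 → 1 ≤ iLo → iHi ≤ 2*k+1 →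
          ∀ x : QBr R n q qi r δ,
          GI iHi * (EE * (gaa 2 (2*k+1) * (gii 1 (2*k) * x))) =
            EE * (gaa 2 (2*k+1) * (gii 1 (2*k) * (GI iLo * x))) := by
        intro iHi iLo hEq hLo hHi x
        subst hEq
        rw [show iLo + 2 = (iLo+1)+1 from rfl,
          ← EGIx R n q qi r δ ((iLo+1)+1) (by omega),
          T1ix R n q qi r δ hq 2 (2*k+1) (iLo+1) (by omega) (by omega) (by omega) (by omega),
          T2ix R n q qi r δ hq 1 (2*k) iLo (by omega) (by omega) (by omega) (by omega)]
      constructor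
      · rw [hT (2*l+4) (2*l+2) (by omega) (by omega) (by omega) (ekk k),
          hT (2*l+3) (2*l+1) (by omega) (by omega) (by omega) (GG (2*l+2) * ekk k),
          hT (2*l+5) (2*l+3) (by omega) (by omega) (by omega) (GG (2*l+2) * ekk k),
          IH'.1]
      · rw [hTi (2*l+4) (2*l+2) (by omega) (by omega) (by omega) (ekk k),
          hTi (2*l+3) (2*l+1) (by omega) (by omega) (by omega) (GI (2*l+2) * ekk k),
          hTi (2*l+5) (2*l+3) (by omega) (by omega) (by omega) (GI (2*l+2) * ekk k),
          IH'.2]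

end
end qBLemmas

open qB in
/-- `g_{2j-1} g_{2j} e_(k) = g_{2j+1} g_{2j} e_(k)` and the inverse version,
for `1 ≤ j < k` and `2k ≤ n`. -/
theorem stmt7 (R : Type) [CommRing R] (n : ℕ) (q qi r ri δ : R)
    (hq : q * qi = 1) (hr : r * ri = 1) (hδ : (q - 1) * δ = r - 1)
    (j k : ℕ) (h1 : 1 ≤ j) (h2 : j < k) (h3 : 2 * k ≤ n) :
    G R n q qi r δ (2 * j - 1) * G R n q qi r δ (2 * j) * ek R n q qi r δ k =
      G R n q qi r δ (2 * j + 1) * G R n q qi r δ (2 * j) * ek R n q qi r δ k ∧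
    GInv R n q qi r δ (2 * j - 1) * GInv R n q qi r δ (2 * j) * ek R n q qi r δ k =
      GInv R n q qi r δ (2 * j + 1) * GInv R n q qi r δ (2 * j) * ek R n q qi r δ k := by
  have h := qBLemmas.mainPair R n q qi r δ hq hδ k (by omega) h3 j h1 h2
  constructor
  · rw [mul_assoc, mul_assoc]; exact h.1
  · rw [mul_assoc, mul_assoc]; exact h.2
end
end

section
/- In the q-Brauer algebra Br_n(r,q), for all l, k with 1 ≤ l < k and 2k ≤ n, one has (g_1 g_2 ⋯ g_{2l}) e_{(k)} = (g_{2l+1} g_{2l} ⋯ g_2) e_{(k)} and (g_1^{−1} g_2^{−1} ⋯ g_{2l}^{−1}) e_{(k)} = (g_{2l+1}^{−1} g_{2l}^{−1} ⋯ g_2^{−1}) e_{(k)}. -/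
noncomputable section

namespace QB8S

open qB

variable {R : Type} [CommRing R] {n : ℕ} {q qi r δ : R}

local notation "𝔸" => qB.QBr R n q qi r δ
local notation "gg" => qB.G R n q qi r δ
local notation "vv" => qB.GInv R n q qi r δ
local notation "EE" => qB.E R n q qi r δ
local notation "Ga" => qB.ga R n q qi r δ
local notation "Gv" => qB.gaInv R n q qi r δ
local notation "Gd" => qB.gd R n q qi r δ
local notation "Gdv" => qB.gdInv R n q qi r δ
local notation "κ" => qB.ek R n q qi r δ

/-- congruence helpers avoiding beta-redex issues -/
lemma lcong (x : 𝔸) {a b : 𝔸} (h : a = b) : x * a = x * b := by rw [h]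
lemma rcong (x : 𝔸) {a b : 𝔸} (h : a = b) : a * x = b * x := by rw [h]
lemma scong (c : R) {a b : 𝔸} (h : a = b) : c • a = c • b := by rw [h]
lemma swap3 {x y : 𝔸} (h : x * y = y * x) (t : 𝔸) : x * (y * t) = y * (x * t) := by
  rw [← mul_assoc, h, mul_assoc]
lemma swap3' {x y z : 𝔸} (h : x * y = y * z) (t : 𝔸) : x * (y * t) = y * (z * t) := by
  rw [← mul_assoc, h, mul_assoc]

lemma qrel {x y : FreeAlgebra R qB.BrGen} (h : qB.BrRel R n q qi r δ x y) :
    RingQuot.mkAlgHom R (qB.BrRel R n q qi r δ) x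
      = RingQuot.mkAlgHom R (qB.BrRel R n q qi r δ) y :=
  RingQuot.mkAlgHom_rel R h

lemma hquad (i : ℕ) (h1 : 1 ≤ i) (h2 : i < n) :
    gg i * gg i = (q - 1) • gg i + q • (1 : 𝔸) := by
  have h := qrel (qB.BrRel.quad (R := R) (n := n) (q := q) (qi := qi) (r := r) (δ := δ) i h1 h2)
  simpa only [qB.G, qB.E, qB.GInv, map_mul, map_add, map_smul, map_one] using h

lemma hcomm (i j : ℕ) (h1 : 1 ≤ i) (h2 : i + 1 < j) (h3 : j < n) :
    gg i * gg j = gg j * gg i := by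
  have h := qrel (qB.BrRel.comm (R := R) (n := n) (q := q) (qi := qi) (r := r) (δ := δ) i j h1 h2 h3)
  simpa only [qB.G, qB.E, qB.GInv, map_mul] using h

lemma hbraid (i : ℕ) (h1 : 1 ≤ i) (h2 : i + 1 < n) :
    gg i * gg (i+1) * gg i = gg (i+1) * gg i * gg (i+1) := by
  have h := qrel (qB.BrRel.braid (R := R) (n := n) (q := q) (qi := qi) (r := r) (δ := δ) i h1 h2)
  simpa only [qB.G, qB.E, qB.GInv, map_mul] using h

lemma he1 : EE * EE = δ • EE := by
  have h := qrel (qB.BrRel.e1 (R := R) (n := n) (q := q) (qi := qi) (r := r) (δ := δ))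
  simpa only [qB.G, qB.E, qB.GInv, map_mul, map_smul] using h

lemma hecomm (i : ℕ) (h1 : 3 ≤ i) (h2 : i < n) : EE * gg i = gg i * EE := by
  have h := qrel (qB.BrRel.e2comm (R := R) (n := n) (q := q) (qi := qi) (r := r) (δ := δ) i h1 h2)
  simpa only [qB.G, qB.E, qB.GInv, map_mul] using h

lemma heg1 (h : 2 ≤ n) : EE * gg 1 = q • EE := by
  have h := qrel (qB.BrRel.e2g1 (R := R) (n := n) (q := q) (qi := qi) (r := r) (δ := δ) h)
  simpa only [qB.G, qB.E, qB.GInv, map_mul, map_smul] using h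

lemma heg2ie (h : 3 ≤ n) : EE * vv 2 * EE = qi • EE := by
  have h := qrel (qB.BrRel.e2g2inv (R := R) (n := n) (q := q) (qi := qi) (r := r) (δ := δ) h)
  simpa only [qB.G, qB.E, qB.GInv, map_mul, map_smul] using h

lemma he3l (h : 4 ≤ n) :
    (gg 2 * gg 3 * vv 1 * vv 2) * (EE * (gg 2 * gg 3 * vv 1 * vv 2) * EE)
      = EE * (gg 2 * gg 3 * vv 1 * vv 2) * EE := by
  have h := qrel (qB.BrRel.e3l (R := R) (n := n) (q := q) (qi := qi) (r := r) (δ := δ) h)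
  simpa only [qB.G, qB.E, qB.GInv, qB.fE2w, map_mul, map_smul] using h

lemma vv_eq (i : ℕ) : vv i = qi • gg i + (qi - 1) • (1 : 𝔸) := by
  simp only [qB.GInv, qB.fgInv, map_add, map_smul, map_one]
  rfl

lemma gv (hq : q * qi = 1) (i : ℕ) (h1 : 1 ≤ i) (h2 : i < n) : gg i * vv i = 1 := by
  rw [vv_eq, mul_add, mul_smul_comm, mul_smul_comm, mul_one, hquad i h1 h2]
  match_scalars <;> linear_combination hq

lemma vg (hq : q * qi = 1) (i : ℕ) (h1 : 1 ≤ i) (h2 : i < n) : vv i * gg i = 1 := by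
  rw [vv_eq, add_mul, smul_mul_assoc, smul_mul_assoc, one_mul, hquad i h1 h2]
  match_scalars <;> linear_combination hq

lemma gvx (hq : q * qi = 1) (i : ℕ) (h1 : 1 ≤ i) (h2 : i < n) {x : 𝔸} :
    gg i * (vv i * x) = x := by rw [← mul_assoc, gv hq i h1 h2, one_mul]

lemma vgx (hq : q * qi = 1) (i : ℕ) (h1 : 1 ≤ i) (h2 : i < n) {x : 𝔸} :
    vv i * (gg i * x) = x := by rw [← mul_assoc, vg hq i h1 h2, one_mul]

lemma hcomm_gv (i j : ℕ) (h1 : 1 ≤ i) (h2 : i + 1 < j) (h3 : j < n) :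
    gg i * vv j = vv j * gg i := by
  rw [vv_eq j]
  simp only [mul_add, add_mul, mul_smul_comm, smul_mul_assoc, mul_one, one_mul,
    hcomm i j h1 h2 h3]

lemma hcomm_vg (i j : ℕ) (h1 : 1 ≤ i) (h2 : i + 1 < j) (h3 : j < n) :
    vv i * gg j = gg j * vv i := by
  rw [vv_eq i]
  simp only [mul_add, add_mul, mul_smul_comm, smul_mul_assoc, mul_one, one_mul,
    hcomm i j h1 h2 h3]

lemma hcomm_vv (i j : ℕ) (h1 : 1 ≤ i) (h2 : i + 1 < j) (h3 : j < n) :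
    vv i * vv j = vv j * vv i := by
  rw [vv_eq j]
  simp only [mul_add, add_mul, mul_smul_comm, smul_mul_assoc, mul_one, one_mul,
    hcomm_vg i j h1 h2 h3]

lemma hecomm_v (i : ℕ) (h1 : 3 ≤ i) (h2 : i < n) : EE * vv i = vv i * EE := by
  rw [vv_eq i]
  simp only [mul_add, add_mul, mul_smul_comm, smul_mul_assoc, mul_one, one_mul,
    hecomm i h1 h2]

lemma hbraid_x (i : ℕ) (h1 : 1 ≤ i) (h2 : i + 1 < n) (x : 𝔸) :
    gg i * (gg (i+1) * (gg i * x)) = gg (i+1) * (gg i * (gg (i+1) * x)) := by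
  simpa only [mul_assoc] using rcong x (hbraid i h1 h2)

lemma braid_inv (hq : q * qi = 1) (i : ℕ) (h1 : 1 ≤ i) (h2 : i + 1 < n) :
    vv i * (vv (i+1) * vv i) = vv (i+1) * (vv i * vv (i+1)) := by
  have hb : gg (i+1) * (gg i * gg (i+1)) = gg i * (gg (i+1) * gg i) := by
    simp only [← mul_assoc]; exact (hbraid i h1 h2).symm
  have P2 : (gg i * (gg (i+1) * gg i)) * (vv i * (vv (i+1) * vv i)) = 1 := by
    simp only [mul_assoc]
    rw [gvx hq i h1 (by omega), gvx hq (i+1) (by omega) h2, gv hq i h1 (by omega)]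
  have P3 : (vv (i+1) * (vv i * vv (i+1))) * (gg (i+1) * (gg i * gg (i+1))) = 1 := by
    simp only [mul_assoc]
    rw [vgx hq (i+1) (by omega) h2, vgx hq i h1 (by omega), vg hq (i+1) (by omega) h2]
  calc vv i * (vv (i+1) * vv i)
      = ((vv (i+1) * (vv i * vv (i+1))) * (gg (i+1) * (gg i * gg (i+1))))
          * (vv i * (vv (i+1) * vv i)) := by rw [P3, one_mul]
    _ = (vv (i+1) * (vv i * vv (i+1)))
          * ((gg i * (gg (i+1) * gg i)) * (vv i * (vv (i+1) * vv i))) := by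
          rw [hb, mul_assoc]
    _ = vv (i+1) * (vv i * vv (i+1)) := by rw [P2, mul_one]

lemma braid_inv_x (hq : q * qi = 1) (i : ℕ) (h1 : 1 ≤ i) (h2 : i + 1 < n) (x : 𝔸) :
    vv i * (vv (i+1) * (vv i * x)) = vv (i+1) * (vv i * (vv (i+1) * x)) := by
  simpa only [mul_assoc] using rcong x (braid_inv hq i h1 h2)

lemma Vba (hq : q * qi = 1) (i : ℕ) (h1 : 1 ≤ i) (h2 : i + 1 < n) (x : 𝔸) :
    vv i * (vv (i+1) * (gg i * x)) = gg (i+1) * (vv i * (vv (i+1) * x)) := by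
  have key : ∀ y : 𝔸, y = vv i * (vv (i+1) * (gg (i+1) * (gg i * y))) := by
    intro y
    rw [vgx hq (i+1) (by omega) h2, vgx hq i h1 (by omega)]
  have e1 : gg (i+1) * (gg i * (vv i * (vv (i+1) * (gg i * x)))) = gg i * x := by
    rw [gvx hq i h1 (by omega), gvx hq (i+1) (by omega) h2]
  have e2 : gg (i+1) * (gg i * (gg (i+1) * (vv i * (vv (i+1) * x)))) = gg i * x := by
    rw [← hbraid_x i h1 h2, gvx hq i h1 (by omega), gvx hq (i+1) (by omega) h2]
  calc vv i * (vv (i+1) * (gg i * x))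
      = vv i * (vv (i+1) * (gg (i+1) * (gg i * (vv i * (vv (i+1) * (gg i * x)))))) := key _
    _ = vv i * (vv (i+1) * (gg (i+1) * (gg i * (gg (i+1) * (vv i * (vv (i+1) * x)))))) := by
        rw [e1, e2]
    _ = gg (i+1) * (vv i * (vv (i+1) * x)) := (key _).symm

end QB8S
namespace QB8S

variable {R : Type} [CommRing R] {n : ℕ} {q qi r δ : R}

local notation "𝔸" => qB.QBr R n q qi r δ
local notation "gg" => qB.G R n q qi r δ
local notation "vv" => qB.GInv R n q qi r δ
local notation "EE" => qB.E R n q qi r δ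
local notation "Ga" => qB.ga R n q qi r δ
local notation "Gv" => qB.gaInv R n q qi r δ
local notation "Gd" => qB.gd R n q qi r δ
local notation "Gdv" => qB.gdInv R n q qi r δ
local notation "κ" => qB.ek R n q qi r δ

lemma ga_nil {a b : ℕ} (h : b + 1 ≤ a) : Ga a b = 1 := by
  have h0 : b + 1 - a = 0 := by omega
  simp [qB.ga, h0]

lemma gv_nil {a b : ℕ} (h : b + 1 ≤ a) : Gv a b = 1 := by
  have h0 : b + 1 - a = 0 := by omega
  simp [qB.gaInv, h0]

lemma ga_concat {a b : ℕ} (h : a ≤ b + 1) : Ga a (b+1) = Ga a b * gg (b+1) := by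
  have h0 : b + 1 + 1 - a = (b + 1 - a) + 1 := by omega
  have h1 : a + 1 * (b + 1 - a) = b + 1 := by omega
  rw [qB.ga, qB.ga, h0, List.range'_concat, h1]
  simp

lemma gv_concat {a b : ℕ} (h : a ≤ b + 1) : Gv a (b+1) = Gv a b * vv (b+1) := by
  have h0 : b + 1 + 1 - a = (b + 1 - a) + 1 := by omega
  have h1 : a + 1 * (b + 1 - a) = b + 1 := by omega
  rw [qB.gaInv, qB.gaInv, h0, List.range'_concat, h1]
  simp

lemma ga_cons {a b : ℕ} (h : a ≤ b) : Ga a b = gg a * Ga (a+1) b := by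
  have h0 : b + 1 - a = (b + 1 - (a+1)) + 1 := by omega
  rw [qB.ga, qB.ga, h0, List.range'_succ]
  simp

lemma gv_cons {a b : ℕ} (h : a ≤ b) : Gv a b = vv a * Gv (a+1) b := by
  have h0 : b + 1 - a = (b + 1 - (a+1)) + 1 := by omega
  rw [qB.gaInv, qB.gaInv, h0, List.range'_succ]
  simp

lemma ga_single (a : ℕ) : Ga a a = gg a := by
  have h0 : a + 1 - a = 1 := by omega
  rw [qB.ga, h0, List.range'_one]
  simp

lemma gv_single (a : ℕ) : Gv a a = vv a := by
  have h0 : a + 1 - a = 1 := by omega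
  rw [qB.gaInv, h0, List.range'_one]
  simp

lemma gd_cons {a b : ℕ} (h : b ≤ a + 1) : Gd (a+1) b = gg (a+1) * Gd a b := by
  have h0 : a + 1 + 1 - b = (a + 1 - b) + 1 := by omega
  have h1 : b + 1 * (a + 1 - b) = a + 1 := by omega
  rw [qB.gd, qB.gd, h0, List.range'_concat, h1]
  simp

lemma gdv_cons {a b : ℕ} (h : b ≤ a + 1) : Gdv (a+1) b = vv (a+1) * Gdv a b := by
  have h0 : a + 1 + 1 - b = (a + 1 - b) + 1 := by omega
  have h1 : b + 1 * (a + 1 - b) = a + 1 := by omega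
  rw [qB.gdInv, qB.gdInv, h0, List.range'_concat, h1]
  simp

lemma gd_single (a : ℕ) : Gd a a = gg a := by
  have h0 : a + 1 - a = 1 := by omega
  rw [qB.gd, h0, List.range'_one]
  simp

lemma gdv_single (a : ℕ) : Gdv a a = vv a := by
  have h0 : a + 1 - a = 1 := by omega
  rw [qB.gdInv, h0, List.range'_one]
  simp

lemma list_comm (x : 𝔸) (L : List ℕ) (f : ℕ → 𝔸) (h : ∀ j ∈ L, x * f j = f j * x) :
    x * (L.map f).prod = (L.map f).prod * x := by
  induction L with
  | nil => simp
  | cons a t ih =>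
      simp only [List.map_cons, List.prod_cons]
      rw [← mul_assoc, h a List.mem_cons_self, mul_assoc,
        ih (fun j hj => h j (List.mem_cons_of_mem _ hj)), ← mul_assoc]

lemma comm_g_ga (i a b : ℕ) (hi1 : 1 ≤ i) (hi2 : i < n) (ha : 1 ≤ a) (hb : b < n)
    (h : b + 2 ≤ i ∨ i + 2 ≤ a) : gg i * Ga a b = Ga a b * gg i := by
  refine list_comm _ _ _ (fun j hj => ?_)
  rw [List.mem_range'_1] at hj
  rcases h with h | h
  · exact (hcomm j i (by omega) (by omega) hi2).symm
  · exact hcomm i j hi1 (by omega) (by omega)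

lemma comm_g_gv (i a b : ℕ) (hi1 : 1 ≤ i) (hi2 : i < n) (ha : 1 ≤ a) (hb : b < n)
    (h : b + 2 ≤ i ∨ i + 2 ≤ a) : gg i * Gv a b = Gv a b * gg i := by
  refine list_comm _ _ _ (fun j hj => ?_)
  rw [List.mem_range'_1] at hj
  rcases h with h | h
  · exact (hcomm_vg j i (by omega) (by omega) hi2).symm
  · exact hcomm_gv i j hi1 (by omega) (by omega)

lemma comm_v_ga (i a b : ℕ) (hi1 : 1 ≤ i) (hi2 : i < n) (ha : 1 ≤ a) (hb : b < n)
    (h : b + 2 ≤ i ∨ i + 2 ≤ a) : vv i * Ga a b = Ga a b * vv i := by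
  refine list_comm _ _ _ (fun j hj => ?_)
  rw [List.mem_range'_1] at hj
  rcases h with h | h
  · exact (hcomm_gv j i (by omega) (by omega) hi2).symm
  · exact hcomm_vg i j hi1 (by omega) (by omega)

lemma comm_v_gv (i a b : ℕ) (hi1 : 1 ≤ i) (hi2 : i < n) (ha : 1 ≤ a) (hb : b < n)
    (h : b + 2 ≤ i ∨ i + 2 ≤ a) : vv i * Gv a b = Gv a b * vv i := by
  refine list_comm _ _ _ (fun j hj => ?_)
  rw [List.mem_range'_1] at hj
  rcases h with h | h
  · exact (hcomm_vv j i (by omega) (by omega) hi2).symm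
  · exact hcomm_vv i j hi1 (by omega) (by omega)

lemma comm_E_ga (a b : ℕ) (ha : 3 ≤ a) (hb : b < n) : EE * Ga a b = Ga a b * EE := by
  refine list_comm _ _ _ (fun j hj => ?_)
  rw [List.mem_range'_1] at hj
  exact hecomm j (by omega) (by omega)

lemma comm_E_gv (a b : ℕ) (ha : 3 ≤ a) (hb : b < n) : EE * Gv a b = Gv a b * EE := by
  refine list_comm _ _ _ (fun j hj => ?_)
  rw [List.mem_range'_1] at hj
  exact hecomm_v j (by omega) (by omega)

lemma ga_pass (s j : ℕ) : ∀ m : ℕ, 1 ≤ s → s ≤ j → j + 1 ≤ m → m < n →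
    gg (j+1) * Ga s m = Ga s m * gg j := by
  intro m
  induction m with
  | zero => intro _ _ h _; omega
  | succ m ih =>
      intro hs h1 h2 h3
      rcases Nat.lt_or_ge j m with hlt | hge
      · -- j + 1 ≤ m : inductive step
        rw [ga_concat (by omega)]
        rw [← mul_assoc, ih hs h1 (by omega) (by omega), mul_assoc,
          hcomm j (m+1) (by omega) (by omega) h3, ← mul_assoc]
      · -- m = j : base case
        have hm : m = j := by omega
        subst hm
        -- Ga s (m+1) = Ga s (m-1) * gg m * gg (m+1)
        rcases Nat.lt_or_ge s m with hsm | hsm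
        · obtain ⟨p, hp⟩ : ∃ p, m = p + 1 := ⟨m - 1, by omega⟩
          subst hp
          rw [ga_concat (by omega), ga_concat (by omega)]
          calc gg (p+1+1) * (Ga s p * gg (p+1) * gg (p+1+1))
              = Ga s p * (gg (p+1+1) * gg (p+1) * gg (p+1+1)) := by
                rw [← mul_assoc, ← mul_assoc, ← mul_assoc,
                  comm_g_ga (p+1+1) s p (by omega) (by omega) (by omega) (by omega)
                    (Or.inl (by omega)), mul_assoc, mul_assoc, mul_assoc, mul_assoc]
            _ = Ga s p * (gg (p+1) * gg (p+1+1) * gg (p+1)) := by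
                have hb : gg (p+1) * gg (p+1+1) * gg (p+1)
                    = gg (p+1+1) * gg (p+1) * gg (p+1+1) := hbraid (p+1) (by omega) (by omega)
                rw [← hb]
            _ = Ga s p * gg (p+1) * gg (p+1+1) * gg (p+1) := by
                simp only [mul_assoc]
        · have hsm' : s = m := by omega
          subst hsm'
          rw [ga_concat (by omega), ga_single]
          have hb : gg s * gg (s+1) * gg s = gg (s+1) * gg s * gg (s+1) :=
            hbraid s (by omega) (by omega)
          rw [← mul_assoc, ← hb]

lemma gv_pass (hq : q * qi = 1) (s j : ℕ) : ∀ m : ℕ, 1 ≤ s → s ≤ j → j + 1 ≤ m → m < n →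
    vv (j+1) * Gv s m = Gv s m * vv j := by
  intro m
  induction m with
  | zero => intro _ _ h _; omega
  | succ m ih =>
      intro hs h1 h2 h3
      rcases Nat.lt_or_ge j m with hlt | hge
      · rw [gv_concat (by omega)]
        rw [← mul_assoc, ih hs h1 (by omega) (by omega), mul_assoc,
          hcomm_vv j (m+1) (by omega) (by omega) h3, ← mul_assoc]
      · have hm : m = j := by omega
        subst hm
        rcases Nat.lt_or_ge s m with hsm | hsm
        · obtain ⟨p, hp⟩ : ∃ p, m = p + 1 := ⟨m - 1, by omega⟩
          subst hp
          rw [gv_concat (by omega), gv_concat (by omega)]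
          calc vv (p+1+1) * (Gv s p * vv (p+1) * vv (p+1+1))
              = Gv s p * (vv (p+1+1) * vv (p+1) * vv (p+1+1)) := by
                rw [← mul_assoc, ← mul_assoc, ← mul_assoc,
                  comm_v_gv (p+1+1) s p (by omega) (by omega) (by omega) (by omega)
                    (Or.inl (by omega)), mul_assoc, mul_assoc, mul_assoc, mul_assoc]
            _ = Gv s p * (vv (p+1) * vv (p+1+1) * vv (p+1)) := by
                have hb : vv (p+1) * (vv (p+1+1) * vv (p+1))
                    = vv (p+1+1) * (vv (p+1) * vv (p+1+1)) :=
                  braid_inv hq (p+1) (by omega) (by omega)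
                simp only [mul_assoc]
                rw [hb]
            _ = Gv s p * vv (p+1) * vv (p+1+1) * vv (p+1) := by
                simp only [mul_assoc]
        · have hsm' : s = m := by omega
          subst hsm'
          rw [gv_concat (by omega), gv_single]
          have hb : vv s * (vv (s+1) * vv s) = vv (s+1) * (vv s * vv (s+1)) :=
            braid_inv hq s (by omega) (by omega)
          simp only [mul_assoc]
          rw [← hb]

lemma ga_pass_v (hq : q * qi = 1) (s j m : ℕ) (hs : 1 ≤ s) (h1 : s ≤ j) (h2 : j + 1 ≤ m)
    (h3 : m < n) : vv (j+1) * Ga s m = Ga s m * vv j := by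
  have h : gg (j+1) * Ga s m = Ga s m * gg j := ga_pass s j m hs h1 h2 h3
  calc vv (j+1) * Ga s m
      = vv (j+1) * (Ga s m * gg j * vv j) := by
        rw [mul_assoc, gv hq j (by omega) (by omega), mul_one]
    _ = vv (j+1) * (gg (j+1) * Ga s m * vv j) := by rw [← h]
    _ = Ga s m * vv j := by
        rw [← mul_assoc, ← mul_assoc, vg hq (j+1) (by omega) (by omega), one_mul]

lemma gv_pass_g (hq : q * qi = 1) (s j m : ℕ) (hs : 1 ≤ s) (h1 : s ≤ j) (h2 : j + 1 ≤ m)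
    (h3 : m < n) : gg (j+1) * Gv s m = Gv s m * gg j := by
  have h : vv (j+1) * Gv s m = Gv s m * vv j := gv_pass hq s j m hs h1 h2 h3
  calc gg (j+1) * Gv s m
      = gg (j+1) * (Gv s m * vv j * gg j) := by
        rw [mul_assoc, vg hq j (by omega) (by omega), mul_one]
    _ = gg (j+1) * (vv (j+1) * Gv s m * gg j) := by rw [← h]
    _ = Gv s m * gg j := by
        rw [← mul_assoc, ← mul_assoc, gv hq (j+1) (by omega) (by omega), one_mul]

end QB8S
namespace QB8S

variable {R : Type} [CommRing R] {n : ℕ} {q qi r δ : R}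

local notation "𝔸" => qB.QBr R n q qi r δ
local notation "gg" => qB.G R n q qi r δ
local notation "vv" => qB.GInv R n q qi r δ
local notation "EE" => qB.E R n q qi r δ
local notation "Ga" => qB.ga R n q qi r δ
local notation "Gv" => qB.gaInv R n q qi r δ
local notation "Gd" => qB.gd R n q qi r δ
local notation "Gdv" => qB.gdInv R n q qi r δ
local notation "κ" => qB.ek R n q qi r δ

lemma ek_succ (k : ℕ) : κ (k+1) = EE * (Ga 2 (2*k+1) * (Gv 1 (2*k) * κ k)) := by
  simp only [qB.ek, mul_assoc]

lemma ek_eE (k : ℕ) (h : 1 ≤ k) : ∃ z : 𝔸, κ k = EE * z := by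
  cases k with
  | zero => omega
  | succ m => exact ⟨_, ek_succ m⟩

lemma eg1x (h : 2 ≤ n) (x : 𝔸) : EE * (gg 1 * x) = q • (EE * x) := by
  rw [← mul_assoc, heg1 h, smul_mul_assoc]

lemma ev2e_x (h : 3 ≤ n) (x : 𝔸) : EE * (vv 2 * (EE * x)) = qi • (EE * x) := by
  rw [← mul_assoc, ← mul_assoc, heg2ie h, smul_mul_assoc]

lemma ev2_ek (k : ℕ) (hk : 1 ≤ k) (h : 3 ≤ n) : EE * (vv 2 * κ k) = qi • κ k := by
  obtain ⟨z, hz⟩ : ∃ z : 𝔸, κ k = EE * z := ek_eE k hk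
  rw [hz, ev2e_x h]

lemma he3lx (h : 4 ≤ n) (x : 𝔸) :
    gg 2 * (gg 3 * (vv 1 * (vv 2 * (EE * (gg 2 * (gg 3 * (vv 1 * (vv 2 * (EE * x)))))))))
      = EE * (gg 2 * (gg 3 * (vv 1 * (vv 2 * (EE * x))))) := by
  have h0 : (gg 2 * gg 3 * vv 1 * vv 2) * (EE * (gg 2 * gg 3 * vv 1 * vv 2) * EE)
      = EE * (gg 2 * gg 3 * vv 1 * vv 2) * EE := he3l h
  simpa only [mul_assoc] using rcong x h0

lemma tfact (k : ℕ) (h1 : 1 ≤ k) (h2 : 2*k+2 ≤ n) (v : 𝔸) :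
    Ga 2 (2*k+1) * (Gv 1 (2*k) * v)
      = gg 2 * (gg 3 * (vv 1 * (vv 2 * (Ga 4 (2*k+1) * (Gv 3 (2*k) * v))))) := by
  have e1 : Ga 2 (2*k+1) = gg 2 * (gg 3 * Ga 4 (2*k+1)) := by
    rw [ga_cons (show (2:ℕ) ≤ 2*k+1 by omega), ga_cons (show (3:ℕ) ≤ 2*k+1 by omega)]
  have e2 : Gv 1 (2*k) = vv 1 * (vv 2 * Gv 3 (2*k)) := by
    rw [gv_cons (show (1:ℕ) ≤ 2*k by omega), gv_cons (show (2:ℕ) ≤ 2*k by omega)]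
  have c1 : Ga 4 (2*k+1) * vv 1 = vv 1 * Ga 4 (2*k+1) :=
    (comm_v_ga 1 4 (2*k+1) (by omega) (by omega) (by omega) (by omega) (Or.inr (by omega))).symm
  have c2 : Ga 4 (2*k+1) * vv 2 = vv 2 * Ga 4 (2*k+1) :=
    (comm_v_ga 2 4 (2*k+1) (by omega) (by omega) (by omega) (by omega) (Or.inr (by omega))).symm
  rw [e1, e2]
  simp only [mul_assoc]
  rw [swap3 c1, swap3 c2]

lemma wfix (hq : q * qi = 1) :
    ∀ k : ℕ, ∀ j : ℕ, j + 2 ≤ k → 2*k ≤ n →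
      gg (2*j+2) * (gg (2*j+3) * (vv (2*j+1) * (vv (2*j+2) * κ k))) = κ k := by
  intro k
  induction k with
  | zero => intro j h _; omega
  | succ m ih =>
      intro j hj hn
      rcases j with _ | j'
      · -- j = 0 : the E3 case
        simp only [Nat.mul_zero, Nat.zero_add]
        obtain ⟨z, hz⟩ : ∃ z : 𝔸, κ m = EE * z := ek_eE m (by omega)
        have cE1 : Gv 3 (2*m) * (EE * z) = EE * (Gv 3 (2*m) * z) :=
          swap3 (comm_E_gv 3 (2*m) (by omega) (by omega)).symm z
        have cE2 : Ga 4 (2*m+1) * (EE * (Gv 3 (2*m) * z))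
            = EE * (Ga 4 (2*m+1) * (Gv 3 (2*m) * z)) :=
          swap3 (comm_E_ga 4 (2*m+1) (by omega) (by omega)).symm _
        have hform : κ (m+1)
            = EE * (gg 2 * (gg 3 * (vv 1 * (vv 2 *
                (EE * (Ga 4 (2*m+1) * (Gv 3 (2*m) * z))))))) := by
          rw [ek_succ m, hz, tfact m (by omega) (by omega), cE1, cE2]
        rw [hform]
        exact he3lx (by omega) _
      · -- j = j' + 1 : pass through the chains
        have keyg : ∀ i : ℕ, 1 ≤ i → i + 2 ≤ 2*m+1 → ∀ v : 𝔸,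
            gg (i+2) * (EE * (Ga 2 (2*m+1) * (Gv 1 (2*m) * v)))
                = EE * (Ga 2 (2*m+1) * (Gv 1 (2*m) * (gg i * v))) := by
          intro i hi1 hi2 v
          have cE : gg (i+2) * EE = EE * gg (i+2) :=
            (hecomm (i+2) (by omega) (by omega)).symm
          have p1 : gg (i+2) * Ga 2 (2*m+1) = Ga 2 (2*m+1) * gg (i+1) :=
            ga_pass 2 (i+1) (2*m+1) (by omega) (by omega) (by omega) (by omega)
          have p2 : gg (i+1) * Gv 1 (2*m) = Gv 1 (2*m) * gg i :=
            gv_pass_g hq 1 i (2*m) (by omega) (by omega) (by omega) (by omega)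
          rw [swap3' cE, swap3' p1, swap3' p2]
        have keyv : ∀ i : ℕ, 1 ≤ i → i + 2 ≤ 2*m+1 → ∀ v : 𝔸,
            vv (i+2) * (EE * (Ga 2 (2*m+1) * (Gv 1 (2*m) * v)))
                = EE * (Ga 2 (2*m+1) * (Gv 1 (2*m) * (vv i * v))) := by
          intro i hi1 hi2 v
          have cE : vv (i+2) * EE = EE * vv (i+2) :=
            (hecomm_v (i+2) (by omega) (by omega)).symm
          have p1 : vv (i+2) * Ga 2 (2*m+1) = Ga 2 (2*m+1) * vv (i+1) :=
            ga_pass_v hq 2 (i+1) (2*m+1) (by omega) (by omega) (by omega) (by omega)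
          have p2 : vv (i+1) * Gv 1 (2*m) = Gv 1 (2*m) * vv i :=
            gv_pass hq 1 i (2*m) (by omega) (by omega) (by omega) (by omega)
          rw [swap3' cE, swap3' p1, swap3' p2]
        have i1 : 2*(j'+1)+2 = (2*j'+2)+2 := by ring
        have i2 : 2*(j'+1)+3 = (2*j'+3)+2 := by ring
        have i3 : 2*(j'+1)+1 = (2*j'+1)+2 := by ring
        rw [ek_succ m, i1, i2, i3]
        rw [keyv (2*j'+2) (by omega) (by omega)]
        rw [keyv (2*j'+1) (by omega) (by omega)]
        rw [keyg (2*j'+3) (by omega) (by omega)]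
        rw [keyg (2*j'+2) (by omega) (by omega)]
        rw [ih j' (by omega) (by omega)]

end QB8S
namespace QB8S

variable {R : Type} [CommRing R] {n : ℕ} {q qi r δ : R}

local notation "𝔸" => qB.QBr R n q qi r δ
local notation "gg" => qB.G R n q qi r δ
local notation "vv" => qB.GInv R n q qi r δ
local notation "EE" => qB.E R n q qi r δ
local notation "Ga" => qB.ga R n q qi r δ
local notation "Gv" => qB.gaInv R n q qi r δ
local notation "Gd" => qB.gd R n q qi r δ
local notation "Gdv" => qB.gdInv R n q qi r δ
local notation "κ" => qB.ek R n q qi r δ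

/-- From `W e_(k) = e_(k)`, peel off to `g3⁻¹(g2⁻¹ e) = g1⁻¹(g2⁻¹ e)` and the M-form. -/
lemma hM1 (hq : q * qi = 1) (k : ℕ) (hk : 2 ≤ k) (hn : 2*k ≤ n) :
    gg 1 * (vv 2 * κ k) = gg 3 * (vv 2 * κ k) := by
  have hW : gg 2 * (gg 3 * (vv 1 * (vv 2 * κ k))) = κ k := by
    have h : gg (2*0+2) * (gg (2*0+3) * (vv (2*0+1) * (vv (2*0+2) * κ k))) = κ k :=
      wfix hq k 0 (by omega) hn
    simpa only [Nat.mul_zero, Nat.zero_add] using h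
  have s1 : gg 3 * (vv 1 * (vv 2 * κ k)) = vv 2 * κ k := by
    have h := lcong (vv 2) hW
    rwa [vgx hq 2 (by omega) (by omega)] at h
  have s2 : vv 1 * (vv 2 * κ k) = vv 3 * (vv 2 * κ k) := by
    have h := lcong (vv 3) s1
    rwa [vgx hq 3 (by omega) (by omega)] at h
  have s3 : vv 2 * κ k = vv 3 * (gg 1 * (vv 2 * κ k)) := by
    have h := lcong (gg 1) s2
    rw [gvx hq 1 (by omega) (by omega)] at h
    rwa [swap3 (hcomm_gv 1 3 (by omega) (by omega) (by omega))] at h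
  have s4 := lcong (gg 3) s3
  rw [gvx hq 3 (by omega) (by omega)] at s4
  exact s4.symm

lemma g3_ek (hq : q * qi = 1) (k : ℕ) (hk : 2 ≤ k) (hn : 2*k ≤ n) :
    gg 3 * κ k = q • κ k := by
  have hv2 : EE * (vv 2 * κ k) = qi • κ k := ev2_ek k (by omega) (by omega)
  have u1 : EE * (gg 1 * (vv 2 * κ k)) = κ k := by
    rw [eg1x (by omega), hv2, smul_smul, hq, one_smul]
  have u2 : EE * (gg 1 * (vv 2 * κ k)) = qi • (gg 3 * κ k) := by
    rw [hM1 hq k hk hn, swap3 (hecomm 3 (by omega) (by omega)), hv2, mul_smul_comm]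
  have h := scong q (u2.symm.trans u1)
  rwa [smul_smul, hq, one_smul] at h

lemma g1_ek (hq : q * qi = 1) (k : ℕ) (hk : 2 ≤ k) (hn : 2*k ≤ n) :
    gg 1 * κ k = q • κ k := by
  have hW : gg 2 * (gg 3 * (vv 1 * (vv 2 * κ k))) = κ k := by
    have h : gg (2*0+2) * (gg (2*0+3) * (vv (2*0+1) * (vv (2*0+2) * κ k))) = κ k :=
      wfix hq k 0 (by omega) hn
    simpa only [Nat.mul_zero, Nat.zero_add] using h
  have hWinv : gg 2 * (gg 1 * (vv 3 * (vv 2 * κ k))) = κ k := by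
    conv_lhs => rw [← hW]
    rw [vgx hq 2 (by omega) (by omega), vgx hq 3 (by omega) (by omega),
      gvx hq 1 (by omega) (by omega), gvx hq 2 (by omega) (by omega)]
  -- conjugation identity W (g1 x) = g3 (W x)
  have hCW : ∀ x : 𝔸, gg 2 * (gg 3 * (vv 1 * (vv 2 * (gg 1 * x))))
      = gg 3 * (gg 2 * (gg 3 * (vv 1 * (vv 2 * x)))) := by
    intro x
    rw [Vba hq 1 (by omega) (by omega), hbraid_x 2 (by omega) (by omega)]
  have hx : gg 2 * (gg 3 * (vv 1 * (vv 2 * (gg 1 * κ k)))) = q • κ k := by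
    rw [hCW, hW, g3_ek hq k hk hn]
  have s1 := lcong (vv 2) hx
  rw [vgx hq 2 (by omega) (by omega)] at s1
  have s2 := lcong (vv 3) s1
  rw [vgx hq 3 (by omega) (by omega)] at s2
  have s3 := lcong (gg 1) s2
  rw [gvx hq 1 (by omega) (by omega)] at s3
  have s4 := lcong (gg 2) s3
  rw [gvx hq 2 (by omega) (by omega)] at s4
  rw [s4]
  simp only [mul_smul_comm]
  rw [hWinv]

lemma godd (hq : q * qi = 1) :
    ∀ j k : ℕ, j + 1 ≤ k → 2 ≤ k → 2*k ≤ n → gg (2*j+1) * κ k = q • κ k := by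
  intro j
  induction j with
  | zero =>
      intro k h1 h2 h3
      have h : gg 1 * κ k = q • κ k := g1_ek hq k h2 h3
      simpa only [Nat.mul_zero, Nat.zero_add] using h
  | succ j' ihj =>
      intro k h1 h2 h3
      rcases Nat.eq_zero_or_pos j' with hj0 | hj0
      · subst hj0
        have h : gg 3 * κ k = q • κ k := g3_ek hq k h2 h3
        have e1 : 2*(0+1)+1 = 3 := by norm_num
        rw [e1]
        exact h
      · -- j' ≥ 1 : push through the chains of κ k = κ (m+1)
        obtain ⟨m, hm⟩ : ∃ m, k = m + 1 := ⟨k - 1, by omega⟩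
        subst hm
        have keyg : ∀ i : ℕ, 1 ≤ i → i + 2 ≤ 2*m+1 → ∀ v : 𝔸,
            gg (i+2) * (EE * (Ga 2 (2*m+1) * (Gv 1 (2*m) * v)))
                = EE * (Ga 2 (2*m+1) * (Gv 1 (2*m) * (gg i * v))) := by
          intro i hi1 hi2 v
          have cE : gg (i+2) * EE = EE * gg (i+2) :=
            (hecomm (i+2) (by omega) (by omega)).symm
          have p1 : gg (i+2) * Ga 2 (2*m+1) = Ga 2 (2*m+1) * gg (i+1) :=
            ga_pass 2 (i+1) (2*m+1) (by omega) (by omega) (by omega) (by omega)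
          have p2 : gg (i+1) * Gv 1 (2*m) = Gv 1 (2*m) * gg i :=
            gv_pass_g hq 1 i (2*m) (by omega) (by omega) (by omega) (by omega)
          rw [swap3' cE, swap3' p1, swap3' p2]
        have i1 : 2*(j'+1)+1 = (2*j'+1)+2 := by ring
        rw [ek_succ m, i1]
        rw [keyg (2*j'+1) (by omega) (by omega)]
        rw [ihj m (by omega) (by omega) (by omega)]
        simp only [mul_smul_comm]

end QB8S
namespace QB8S

variable {R : Type} [CommRing R] {n : ℕ} {q qi r δ : R}

local notation "𝔸" => qB.QBr R n q qi r δ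
local notation "gg" => qB.G R n q qi r δ
local notation "vv" => qB.GInv R n q qi r δ
local notation "EE" => qB.E R n q qi r δ
local notation "Ga" => qB.ga R n q qi r δ
local notation "Gv" => qB.gaInv R n q qi r δ
local notation "Gd" => qB.gd R n q qi r δ
local notation "Gdv" => qB.gdInv R n q qi r δ
local notation "κ" => qB.ek R n q qi r δ

lemma hIs1 (hq : q * qi = 1) (k j : ℕ) (hj : j + 2 ≤ k) (hn : 2*k ≤ n) :
    gg (2*j+3) * (vv (2*j+1) * (vv (2*j+2) * κ k)) = vv (2*j+2) * κ k := by
  have hW : gg (2*j+2) * (gg (2*j+3) * (vv (2*j+1) * (vv (2*j+2) * κ k))) = κ k :=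
    wfix hq k j hj hn
  have s1 := lcong (vv (2*j+2)) hW
  rwa [vgx hq (2*j+2) (by omega) (by omega)] at s1

lemma hIlem (hq : q * qi = 1) (k j : ℕ) (hj : j + 2 ≤ k) (hn : 2*k ≤ n) :
    vv (2*j+1) * (vv (2*j+2) * κ k) = vv (2*j+3) * (vv (2*j+2) * κ k) := by
  have s1 : gg (2*j+3) * (vv (2*j+1) * (vv (2*j+2) * κ k)) = vv (2*j+2) * κ k :=
    hIs1 hq k j hj hn
  have s2 := lcong (vv (2*j+3)) s1
  rwa [vgx hq (2*j+3) (by omega) (by omega)] at s2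

lemma hMlem (hq : q * qi = 1) (k j : ℕ) (hj : j + 2 ≤ k) (hn : 2*k ≤ n) :
    gg (2*j+3) * (vv (2*j+2) * κ k) = gg (2*j+1) * (vv (2*j+2) * κ k) := by
  have s1 : gg (2*j+3) * (vv (2*j+1) * (vv (2*j+2) * κ k)) = vv (2*j+2) * κ k :=
    hIs1 hq k j hj hn
  have s3 := lcong (gg (2*j+1)) s1
  rw [swap3 (hcomm (2*j+1) (2*j+3) (by omega) (by omega) (by omega))] at s3
  rwa [gvx hq (2*j+1) (by omega) (by omega)] at s3

lemma hPlem (hq : q * qi = 1) (k j : ℕ) (hj : j + 2 ≤ k) (hn : 2*k ≤ n) :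
    gg (2*j+1) * (gg (2*j+2) * κ k) = gg (2*j+3) * (gg (2*j+2) * κ k) := by
  have hM : gg (2*j+3) * (vv (2*j+2) * κ k) = gg (2*j+1) * (vv (2*j+2) * κ k) :=
    hMlem hq k j hj hn
  rw [vv_eq (2*j+2)] at hM
  simp only [add_mul, smul_mul_assoc, one_mul, mul_add, mul_smul_comm] at hM
  have o1 : gg (2*j+3) * κ k = q • κ k := by
    have h : gg (2*(j+1)+1) * κ k = q • κ k := godd hq (j+1) k (by omega) (by omega) hn
    rwa [show 2*(j+1)+1 = 2*j+3 from by ring] at h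
  have o2 : gg (2*j+1) * κ k = q • κ k := godd hq j k (by omega) (by omega) hn
  rw [o1, o2] at hM
  have h5 := add_right_cancel hM
  have h6 := scong q h5
  rw [smul_smul, smul_smul, hq, one_smul, one_smul] at h6
  exact h6.symm

lemma mainlem (hq : q * qi = 1) :
    ∀ l k : ℕ, 1 ≤ l → l < k → 2*k ≤ n →
      Ga 1 (2*l) * κ k = Gd (2*l+1) 2 * κ k
        ∧ Gv 1 (2*l) * κ k = Gdv (2*l+1) 2 * κ k := by
  intro l
  induction l with
  | zero => intro k h1 h2 h3; omega
  | succ l' ih =>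
      intro k h1 h2 h3
      rcases Nat.eq_zero_or_pos l' with hl0 | hl0
      · subst hl0
        rw [show (2*(0+1) : ℕ) = 2 from by norm_num,
          show (2*(0+1)+1 : ℕ) = 3 from by norm_num]
        have dga : Ga 1 2 = gg 1 * gg 2 := by
          have h' : Ga 1 2 = Ga 1 1 * gg 2 := ga_concat (a := 1) (b := 1) (by omega)
          rw [h', ga_single]
        have dgd : Gd 3 2 = gg 3 * gg 2 := by
          have h' : Gd 3 2 = gg 3 * Gd 2 2 := gd_cons (a := 2) (b := 2) (by omega)
          rw [h', gd_single]
        have dgv : Gv 1 2 = vv 1 * vv 2 := by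
          have h' : Gv 1 2 = Gv 1 1 * vv 2 := gv_concat (a := 1) (b := 1) (by omega)
          rw [h', gv_single]
        have dgdv : Gdv 3 2 = vv 3 * vv 2 := by
          have h' : Gdv 3 2 = vv 3 * Gdv 2 2 := gdv_cons (a := 2) (b := 2) (by omega)
          rw [h', gdv_single]
        constructor
        · rw [dga, dgd]
          simp only [mul_assoc]
          have hP : gg (2*0+1) * (gg (2*0+2) * κ k) = gg (2*0+3) * (gg (2*0+2) * κ k) :=
            hPlem hq k 0 (by omega) h3
          simpa only [Nat.mul_zero, Nat.zero_add] using hP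
        · rw [dgv, dgdv]
          simp only [mul_assoc]
          have hI : vv (2*0+1) * (vv (2*0+2) * κ k) = vv (2*0+3) * (vv (2*0+2) * κ k) :=
            hIlem hq k 0 (by omega) h3
          simpa only [Nat.mul_zero, Nat.zero_add] using hI
      · obtain ⟨ihg, ihv⟩ := ih k hl0 (by omega) h3
        rw [show (2*(l'+1)+1 : ℕ) = 2*l'+2+1 from by ring,
          show (2*(l'+1) : ℕ) = 2*l'+1+1 from by ring]
        have hP : gg (2*l'+1) * (gg (2*l'+2) * κ k) = gg (2*l'+3) * (gg (2*l'+2) * κ k) :=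
          hPlem hq k l' (by omega) h3
        have hI : vv (2*l'+1) * (vv (2*l'+2) * κ k) = vv (2*l'+3) * (vv (2*l'+2) * κ k) :=
          hIlem hq k l' (by omega) h3
        constructor
        · have d1 : Ga 1 (2*l'+1+1) = Ga 1 (2*l'+1) * gg (2*l'+1+1) := ga_concat (by omega)
          have d2 : Ga 1 (2*l'+1) = Ga 1 (2*l') * gg (2*l'+1) := ga_concat (by omega)
          have dd1 : Gd (2*l'+2+1) 2 = gg (2*l'+2+1) * Gd (2*l'+2) 2 := gd_cons (by omega)
          have dd2 : Gd (2*l'+2) 2 = gg (2*l'+2) * Gd (2*l'+1) 2 := by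
            have h' : Gd (2*l'+1+1) 2 = gg (2*l'+1+1) * Gd (2*l'+1) 2 := gd_cons (by omega)
            rwa [show (2*l'+1+1 : ℕ) = 2*l'+2 from by ring] at h'
          have c1 : gg (2*l'+3) * Ga 1 (2*l') = Ga 1 (2*l') * gg (2*l'+3) :=
            comm_g_ga (2*l'+3) 1 (2*l') (by omega) (by omega) (by omega) (by omega)
              (Or.inl (by omega))
          have c2 : gg (2*l'+2) * Ga 1 (2*l') = Ga 1 (2*l') * gg (2*l'+2) :=
            comm_g_ga (2*l'+2) 1 (2*l') (by omega) (by omega) (by omega) (by omega)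
              (Or.inl (by omega))
          rw [d1, d2, dd1, dd2]
          rw [show (2*l'+1+1 : ℕ) = 2*l'+2 from by ring,
            show (2*l'+2+1 : ℕ) = 2*l'+3 from by ring]
          simp only [mul_assoc]
          rw [hP, swap3 c1.symm, swap3 c2.symm, ihg]
        · have d1 : Gv 1 (2*l'+1+1) = Gv 1 (2*l'+1) * vv (2*l'+1+1) := gv_concat (by omega)
          have d2 : Gv 1 (2*l'+1) = Gv 1 (2*l') * vv (2*l'+1) := gv_concat (by omega)
          have dd1 : Gdv (2*l'+2+1) 2 = vv (2*l'+2+1) * Gdv (2*l'+2) 2 := gdv_cons (by omega)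
          have dd2 : Gdv (2*l'+2) 2 = vv (2*l'+2) * Gdv (2*l'+1) 2 := by
            have h' : Gdv (2*l'+1+1) 2 = vv (2*l'+1+1) * Gdv (2*l'+1) 2 := gdv_cons (by omega)
            rwa [show (2*l'+1+1 : ℕ) = 2*l'+2 from by ring] at h'
          have c1 : vv (2*l'+3) * Gv 1 (2*l') = Gv 1 (2*l') * vv (2*l'+3) :=
            comm_v_gv (2*l'+3) 1 (2*l') (by omega) (by omega) (by omega) (by omega)
              (Or.inl (by omega))
          have c2 : vv (2*l'+2) * Gv 1 (2*l') = Gv 1 (2*l') * vv (2*l'+2) :=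
            comm_v_gv (2*l'+2) 1 (2*l') (by omega) (by omega) (by omega) (by omega)
              (Or.inl (by omega))
          rw [d1, d2, dd1, dd2]
          rw [show (2*l'+1+1 : ℕ) = 2*l'+2 from by ring,
            show (2*l'+2+1 : ℕ) = 2*l'+3 from by ring]
          simp only [mul_assoc]
          rw [hI, swap3 c1.symm, swap3 c2.symm, ihv]

end QB8S

open qB in
/-- `(g_1 g_2 ⋯ g_{2l}) e_(k) = (g_{2l+1} g_{2l} ⋯ g_2) e_(k)` and the
inverse version, for `1 ≤ l < k` and `2k ≤ n`. -/
theorem stmt8 (R : Type) [CommRing R] (n : ℕ) (q qi r ri δ : R)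
    (hq : q * qi = 1) (hr : r * ri = 1) (hδ : (q - 1) * δ = r - 1)
    (l k : ℕ) (h1 : 1 ≤ l) (h2 : l < k) (h3 : 2 * k ≤ n) :
    ga R n q qi r δ 1 (2 * l) * ek R n q qi r δ k =
      gd R n q qi r δ (2 * l + 1) 2 * ek R n q qi r δ k ∧
    gaInv R n q qi r δ 1 (2 * l) * ek R n q qi r δ k =
      gdInv R n q qi r δ (2 * l + 1) 2 * ek R n q qi r δ k := by
  exact QB8S.mainlem hq l k h1 h2 h3
end
end

section
/- In the q-Brauer algebra Br_n(r,q), for all j, k with 1 ≤ j ≤ k and 2k ≤ n, one has e_{(j)} e_{(k)} = e_{(k)} e_{(j)} = δ^{j} · e_{(k)}. -/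
noncomputable section

namespace qB

section Dev
variable {R : Type} [CommRing R] {n : ℕ} {q qi r δ : R}

/-- short name for `G` with implicit parameters -/
def g (i : ℕ) : QBr R n q qi r δ := G R n q qi r δ i
def gv (i : ℕ) : QBr R n q qi r δ := GInv R n q qi r δ i
def ee : QBr R n q qi r δ := E R n q qi r δ

lemma rel {x y : FreeAlgebra R BrGen} (h : BrRel R n q qi r δ x y) :
    RingQuot.mkAlgHom R (BrRel R n q qi r δ) x = RingQuot.mkAlgHom R (BrRel R n q qi r δ) y :=
  RingQuot.mkAlgHom_rel R h

lemma gv_eq (i : ℕ) : (gv i : QBr R n q qi r δ) = qi • g i + (qi - 1) • 1 := by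
  simp [gv, GInv, fgInv, g, G, map_add, map_smul, map_one]

lemma rel_quad {i : ℕ} (h1 : 1 ≤ i) (h2 : i < n) :
    (g i * g i : QBr R n q qi r δ) = (q - 1) • g i + q • 1 := by
  have := rel (BrRel.quad (R := R) (q := q) (qi := qi) (r := r) (δ := δ) i h1 h2)
  simpa [g, G, map_mul, map_add, map_smul, map_one] using this

lemma rel_comm {i j : ℕ} (h1 : 1 ≤ i) (h2 : i + 2 ≤ j) (h3 : j < n) :
    (g i * g j : QBr R n q qi r δ) = g j * g i := by
  have := rel (BrRel.comm (R := R) (q := q) (qi := qi) (r := r) (δ := δ) i j h1 h2 h3)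
  simpa [g, G, map_mul] using this

lemma rel_braid {i : ℕ} (h1 : 1 ≤ i) (h2 : i + 2 ≤ n) :
    (g i * g (i+1) * g i : QBr R n q qi r δ) = g (i+1) * g i * g (i+1) := by
  have := rel (BrRel.braid (R := R) (q := q) (qi := qi) (r := r) (δ := δ) i h1 h2)
  simpa [g, G, map_mul] using this

lemma rel_ee : (ee * ee : QBr R n q qi r δ) = δ • ee := by
  have := rel (BrRel.e1 (R := R) (n := n) (q := q) (qi := qi) (r := r) (δ := δ))
  simpa [ee, E, map_mul, map_smul] using this

lemma rel_ecomm {i : ℕ} (h1 : 3 ≤ i) (h2 : i < n) :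
    (ee * g i : QBr R n q qi r δ) = g i * ee := by
  have := rel (BrRel.e2comm (R := R) (q := q) (qi := qi) (r := r) (δ := δ) i h1 h2)
  simpa [ee, E, g, G, map_mul] using this

lemma rel_eg1 (h : 2 ≤ n) : (ee * g 1 : QBr R n q qi r δ) = q • ee := by
  have := rel (BrRel.e2g1 (R := R) (q := q) (qi := qi) (r := r) (δ := δ) h)
  simpa [ee, E, g, G, map_mul, map_smul] using this

lemma rel_e3l (h : 4 ≤ n) :
    ((g 2 * g 3 * gv 1 * gv 2) * (ee * (g 2 * g 3 * gv 1 * gv 2) * ee) : QBr R n q qi r δ)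
      = ee * (g 2 * g 3 * gv 1 * gv 2) * ee := by
  have := rel (BrRel.e3l (R := R) (q := q) (qi := qi) (r := r) (δ := δ) h)
  simpa [ee, E, g, G, gv, GInv, fE2w, map_mul] using this

lemma rel_e3r (h : 4 ≤ n) :
    ((ee * (g 2 * g 3 * gv 1 * gv 2) * ee) * (g 2 * g 3 * gv 1 * gv 2) : QBr R n q qi r δ)
      = ee * (g 2 * g 3 * gv 1 * gv 2) * ee := by
  have := rel (BrRel.e3r (R := R) (q := q) (qi := qi) (r := r) (δ := δ) h)
  simpa [ee, E, g, G, gv, GInv, fE2w, map_mul] using this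

-- inverses
lemma g_mul_gv {i : ℕ} (hq : q * qi = 1) (h1 : 1 ≤ i) (h2 : i < n) :
    (g i * gv i : QBr R n q qi r δ) = 1 := by
  rw [gv_eq, mul_add, mul_smul_comm, mul_smul_comm, rel_quad h1 h2, mul_one]
  rw [smul_add, smul_smul, smul_smul]
  have hz : qi * (q - 1) + (qi - 1) = 0 := by linear_combination hq
  have ho : qi * q = 1 := by linear_combination hq
  rw [add_right_comm, ← add_smul, hz, zero_smul, zero_add, ho, one_smul]

lemma gv_mul_g {i : ℕ} (hq : q * qi = 1) (h1 : 1 ≤ i) (h2 : i < n) :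
    (gv i * g i : QBr R n q qi r δ) = 1 := by
  rw [gv_eq, add_mul, smul_mul_assoc, smul_mul_assoc, rel_quad h1 h2, one_mul]
  rw [smul_add, smul_smul, smul_smul]
  have hz : qi * (q - 1) + (qi - 1) = 0 := by linear_combination hq
  have ho : qi * q = 1 := by linear_combination hq
  rw [add_right_comm, ← add_smul, hz, zero_smul, zero_add, ho, one_smul]


-- reassociation helpers
lemma ra2 {M : Type*} [Semigroup M] {a b c d : M} (h : a * b = c * d) (x : M) :
    a * (b * x) = c * (d * x) := by rw [← mul_assoc, h, mul_assoc]

lemma ra1 {M : Type*} [Semigroup M] {a b c : M} (h : a * b = c) (x : M) :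
    a * (b * x) = c * x := by rw [← mul_assoc, h]

-- commutation, linear extension
lemma commute_gv_of_g {x : QBr R n q qi r δ} {i : ℕ} (h : Commute x (g i)) :
    Commute x (gv i) := by
  rw [gv_eq]
  exact (h.smul_right qi).add_right ((Commute.one_right x).smul_right (qi - 1))

lemma commute_e_g {i : ℕ} (h1 : 3 ≤ i) (h2 : i < n) :
    Commute (ee : QBr R n q qi r δ) (g i) := rel_ecomm h1 h2

lemma commute_e_gv {i : ℕ} (h1 : 3 ≤ i) (h2 : i < n) :
    Commute (ee : QBr R n q qi r δ) (gv i) :=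
  commute_gv_of_g (commute_e_g h1 h2)

lemma commute_g_g {i j : ℕ} (h1 : 1 ≤ i) (h2 : i + 2 ≤ j) (h3 : j < n) :
    Commute (g i : QBr R n q qi r δ) (g j) := rel_comm h1 h2 h3

-- ga structural lemmas
lemma ga_empty {a b : ℕ} (h : b + 1 ≤ a) : ga R n q qi r δ a b = 1 := by
  have : b + 1 - a = 0 := Nat.sub_eq_zero_of_le h
  simp [ga, this]

lemma gaInv_empty {a b : ℕ} (h : b + 1 ≤ a) : gaInv R n q qi r δ a b = 1 := by
  have : b + 1 - a = 0 := Nat.sub_eq_zero_of_le h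
  simp [gaInv, this]

lemma ga_concat {a b : ℕ} (h : a ≤ b + 1) :
    ga R n q qi r δ a (b+1) = ga R n q qi r δ a b * g (b+1) := by
  have h1 : b + 1 + 1 - a = (b + 1 - a) + 1 := by omega
  have h2 : a + 1 * (b + 1 - a) = b + 1 := by omega
  rw [ga, h1, List.range'_concat, h2, List.map_append, List.prod_append]
  simp [ga, g]

lemma gaInv_concat {a b : ℕ} (h : a ≤ b + 1) :
    gaInv R n q qi r δ a (b+1) = gaInv R n q qi r δ a b * gv (b+1) := by
  have h1 : b + 1 + 1 - a = (b + 1 - a) + 1 := by omega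
  have h2 : a + 1 * (b + 1 - a) = b + 1 := by omega
  rw [gaInv, h1, List.range'_concat, h2, List.map_append, List.prod_append]
  simp [gaInv, gv]

lemma ga_cons {a b : ℕ} (h : a ≤ b) :
    ga R n q qi r δ a b = g a * ga R n q qi r δ (a+1) b := by
  have h1 : b + 1 - a = (b - a) + 1 := by omega
  have h2 : b + 1 - (a+1) = b - a := by omega
  rw [ga, h1, List.range'_succ, List.map_cons, List.prod_cons, ga, h2]
  rfl

lemma gaInv_cons {a b : ℕ} (h : a ≤ b) :
    gaInv R n q qi r δ a b = gv a * gaInv R n q qi r δ (a+1) b := by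
  have h1 : b + 1 - a = (b - a) + 1 := by omega
  have h2 : b + 1 - (a+1) = b - a := by omega
  rw [gaInv, h1, List.range'_succ, List.map_cons, List.prod_cons, gaInv, h2]
  rfl

lemma ga_single (a : ℕ) : ga R n q qi r δ a a = g a := by
  have h1 : a + 1 - a = 1 := by omega
  rw [ga, h1]; simp [g]

lemma gaInv_single (a : ℕ) : gaInv R n q qi r δ a a = gv a := by
  have h1 : a + 1 - a = 1 := by omega
  rw [gaInv, h1]; simp [gv]

-- commuting a fixed element with products
lemma commute_ga {x : QBr R n q qi r δ} {a b : ℕ}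
    (h : ∀ j, a ≤ j → j ≤ b → Commute x (g j)) : Commute x (ga R n q qi r δ a b) := by
  apply Commute.list_prod_right
  intro y hy
  simp only [List.mem_map, List.mem_range'_1] at hy
  obtain ⟨j, ⟨hj1, hj2⟩, rfl⟩ := hy
  exact h j hj1 (by omega)

lemma commute_gaInv {x : QBr R n q qi r δ} {a b : ℕ}
    (h : ∀ j, a ≤ j → j ≤ b → Commute x (g j)) : Commute x (gaInv R n q qi r δ a b) := by
  apply Commute.list_prod_right
  intro y hy
  simp only [List.mem_map, List.mem_range'_1] at hy
  obtain ⟨j, ⟨hj1, hj2⟩, rfl⟩ := hy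
  exact commute_gv_of_g (h j hj1 (by omega))


lemma ga_shift {u v i : ℕ} (hu : 1 ≤ u) (hv : v < n) (hi : u ≤ i) (hiv : i < v) :
    (ga R n q qi r δ u v * g i : QBr R n q qi r δ) = g (i+1) * ga R n q qi r δ u v := by
  induction v with
  | zero => omega
  | succ v ih =>
    rw [ga_concat (by omega : u ≤ v + 1)]
    rcases Nat.lt_or_ge i v with hc | hc
    · have hcomm : (g (v+1) * g i : QBr R n q qi r δ) = g i * g (v+1) :=
        (rel_comm (by omega) (by omega) hv).symm
      calc ga R n q qi r δ u v * g (v+1) * g i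
          = ga R n q qi r δ u v * (g (v+1) * g i) := by rw [mul_assoc]
        _ = ga R n q qi r δ u v * (g i * g (v+1)) := by rw [hcomm]
        _ = ga R n q qi r δ u v * g i * g (v+1) := by rw [mul_assoc]
        _ = g (i+1) * ga R n q qi r δ u v * g (v+1) := by
              rw [ih (by omega) (by omega)]
        _ = g (i+1) * (ga R n q qi r δ u v * g (v+1)) := by rw [mul_assoc]
    · have hiv' : i = v := by omega
      subst hiv'
      have hbr := rel_braid (R := R) (n := n) (q := q) (qi := qi) (r := r) (δ := δ)
        (i := i) (by omega) (by omega)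
      rcases Nat.lt_or_ge u i with hu' | hu'
      · obtain ⟨w, rfl⟩ : ∃ w, i = w + 1 := ⟨i - 1, by omega⟩
        rw [ga_concat (by omega : u ≤ w + 1)]
        have hcm : Commute (g (w+1+1) : QBr R n q qi r δ) (ga R n q qi r δ u w) :=
          commute_ga (fun j hj1 hj2 =>
            (commute_g_g (by omega) (by omega) (by omega)).symm)
        have hb : (g (w+1) * (g (w+1+1) * g (w+1)) : QBr R n q qi r δ)
            = g (w+1+1) * (g (w+1) * g (w+1+1)) := by
          simpa only [mul_assoc] using hbr
        simp only [mul_assoc]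
        rw [hb, ← mul_assoc, ← hcm.eq, mul_assoc]
      · have hu'' : u = i := by omega
        subst hu''
        rw [ga_single]
        simpa only [mul_assoc] using hbr

-- mixed braid: gv i * gv (i+1) * g i = g (i+1) * gv i * gv (i+1)
lemma mixed_braid {i : ℕ} (hq : q * qi = 1) (h1 : 1 ≤ i) (h2 : i + 2 ≤ n) :
    (gv i * gv (i+1) * g i : QBr R n q qi r δ) = g (i+1) * gv i * gv (i+1) := by
  set a := (g i : QBr R n q qi r δ)
  set b := (g (i+1) : QBr R n q qi r δ)
  set a' := (gv i : QBr R n q qi r δ)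
  set b' := (gv (i+1) : QBr R n q qi r δ)
  have haa' : a * a' = 1 := g_mul_gv hq h1 (by omega)
  have ha'a : a' * a = 1 := gv_mul_g hq h1 (by omega)
  have hbb' : b * b' = 1 := g_mul_gv hq (by omega) (by omega)
  have hb'b : b' * b = 1 := gv_mul_g hq (by omega) (by omega)
  have hbr : a * b * a = b * a * b := rel_braid h1 h2
  have h1' : a * b = b * a * b * a' := by
    rw [← hbr]; simp only [mul_assoc, haa', mul_one]
  have e1 : b' * a = a * b * a' * b' := by
    calc b' * a = b' * a * (b * b') := by rw [hbb', mul_one]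
      _ = b' * (a * b) * b' := by simp only [mul_assoc]
      _ = b' * (b * a * b * a') * b' := by rw [h1']
      _ = a * b * a' * b' := by
            simp only [mul_assoc]; rw [ra1 hb'b, one_mul]
  calc a' * b' * a = a' * (b' * a) := by rw [mul_assoc]
    _ = a' * (a * b * a' * b') := by rw [e1]
    _ = b * a' * b' := by
          simp only [mul_assoc]; rw [ra1 ha'a, one_mul]

lemma gaInv_shift {u v i : ℕ} (hq : q * qi = 1) (hu : 1 ≤ u) (hv : v < n)
    (hi : u ≤ i) (hiv : i < v) :
    (gaInv R n q qi r δ u v * g i : QBr R n q qi r δ)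
      = g (i+1) * gaInv R n q qi r δ u v := by
  induction v with
  | zero => omega
  | succ v ih =>
    rw [gaInv_concat (by omega : u ≤ v + 1)]
    rcases Nat.lt_or_ge i v with hc | hc
    · have hcomm : (gv (v+1) * g i : QBr R n q qi r δ) = g i * gv (v+1) :=
        ((commute_gv_of_g (x := (g i : QBr R n q qi r δ))
          (commute_g_g (by omega) (by omega) (by omega))).symm).eq
      calc gaInv R n q qi r δ u v * gv (v+1) * g i
          = gaInv R n q qi r δ u v * (gv (v+1) * g i) := by rw [mul_assoc]
        _ = gaInv R n q qi r δ u v * (g i * gv (v+1)) := by rw [hcomm]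
        _ = gaInv R n q qi r δ u v * g i * gv (v+1) := by rw [mul_assoc]
        _ = g (i+1) * gaInv R n q qi r δ u v * gv (v+1) := by
              rw [ih (by omega) (by omega)]
        _ = g (i+1) * (gaInv R n q qi r δ u v * gv (v+1)) := by rw [mul_assoc]
    · have hiv' : i = v := by omega
      subst hiv'
      have hmb := mixed_braid (R := R) (n := n) (q := q) (r := r) (δ := δ)
        (i := i) hq (by omega) (by omega)
      rcases Nat.lt_or_ge u i with hu' | hu'
      · obtain ⟨w, rfl⟩ : ∃ w, i = w + 1 := ⟨i - 1, by omega⟩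
        rw [gaInv_concat (by omega : u ≤ w + 1)]
        have hcm : Commute (g (w+1+1) : QBr R n q qi r δ) (gaInv R n q qi r δ u w) :=
          commute_gaInv (fun j hj1 hj2 =>
            (commute_g_g (by omega) (by omega) (by omega)).symm)
        have hb : (gv (w+1) * (gv (w+1+1) * g (w+1)) : QBr R n q qi r δ)
            = g (w+1+1) * (gv (w+1) * gv (w+1+1)) := by
          simpa only [mul_assoc] using hmb
        simp only [mul_assoc]
        rw [hb, ← mul_assoc, ← hcm.eq, mul_assoc]
      · have hu'' : u = i := by omega
        subst hu''
        rw [gaInv_single]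
        simpa only [mul_assoc] using hmb


-- the words w_m, C_m, s_m
def w (m : ℕ) : QBr R n q qi r δ :=
  ga R n q qi r δ 2 (2*m+1) * gaInv R n q qi r δ 1 (2*m)

def cc (m : ℕ) : QBr R n q qi r δ :=
  ga R n q qi r δ 4 (2*m+1) * gaInv R n q qi r δ 3 (2*m)

def s (m : ℕ) : QBr R n q qi r δ :=
  g (2*m+2) * (g (2*m+3) * (gv (2*m+1) * gv (2*m+2)))

lemma conj_gv {x : QBr R n q qi r δ} {i j : ℕ} (h : x * g i = g j * x) :
    x * gv i = gv j * x := by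
  simp only [gv_eq, mul_add, add_mul, mul_smul_comm, smul_mul_assoc, h, mul_one, one_mul]

lemma w_shift {m i : ℕ} (hq : q * qi = 1) (hm : 1 ≤ m) (hn : 2*m+2 ≤ n)
    (h1 : 1 ≤ i) (h2 : i ≤ 2*m-1) :
    (w m * g i : QBr R n q qi r δ) = g (i+2) * w m := by
  rw [w, mul_assoc, gaInv_shift hq (by omega) (by omega) (by omega) (by omega),
    ← mul_assoc, ga_shift (by omega) (by omega) (by omega) (by omega), mul_assoc]

lemma w_shift_gv {m i : ℕ} (hq : q * qi = 1) (hm : 1 ≤ m) (hn : 2*m+2 ≤ n)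
    (h1 : 1 ≤ i) (h2 : i ≤ 2*m-1) :
    (w m * gv i : QBr R n q qi r δ) = gv (i+2) * w m :=
  conj_gv (w_shift hq hm hn h1 h2)

lemma ga_conj_w {a b m : ℕ} (hq : q * qi = 1) (hm : 1 ≤ m) (hn : 2*m+2 ≤ n)
    (ha : 1 ≤ a) (hb : b ≤ 2*m-1) :
    (ga R n q qi r δ (a+2) (b+2) * w m : QBr R n q qi r δ)
      = w m * ga R n q qi r δ a b := by
  induction b with
  | zero =>
      rw [ga_empty (by omega), ga_empty (by omega), one_mul, mul_one]
  | succ b ih =>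
      rcases Nat.lt_or_ge b (a-1) with hc | hc
      · rcases Nat.lt_or_ge (b+1) a with hd | hd
        · rw [ga_empty (by omega), ga_empty (by omega), one_mul, mul_one]
        · have hba : b + 1 = a := by omega
          rw [hba, ga_single, ga_single,
            (w_shift (i := a) hq hm hn (by omega) (by omega)).symm]
      · have h3 : b+1+2 = (b+2)+1 := by omega
        rw [h3, ga_concat (a := a+2) (b := b+2) (by omega),
          ga_concat (a := a) (b := b) (by omega)]
        have h4 : b + 2 + 1 = (b+1) + 2 := by omega
        calc ga R n q qi r δ (a+2) (b+2) * g (b+2+1) * w m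
            = ga R n q qi r δ (a+2) (b+2) * (g ((b+1)+2) * w m) := by
              rw [mul_assoc, h4]
          _ = ga R n q qi r δ (a+2) (b+2) * (w m * g (b+1)) := by
              rw [← w_shift hq hm hn (by omega) (by omega)]
          _ = ga R n q qi r δ (a+2) (b+2) * w m * g (b+1) := by rw [mul_assoc]
          _ = w m * ga R n q qi r δ a b * g (b+1) := by rw [ih (by omega)]
          _ = w m * (ga R n q qi r δ a b * g (b+1)) := by rw [mul_assoc]


lemma gaInv_conj_w {a b m : ℕ} (hq : q * qi = 1) (hm : 1 ≤ m) (hn : 2*m+2 ≤ n)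
    (ha : 1 ≤ a) (hb : b ≤ 2*m-1) :
    (gaInv R n q qi r δ (a+2) (b+2) * w m : QBr R n q qi r δ)
      = w m * gaInv R n q qi r δ a b := by
  induction b with
  | zero =>
      rw [gaInv_empty (by omega), gaInv_empty (by omega), one_mul, mul_one]
  | succ b ih =>
      rcases Nat.lt_or_ge b (a-1) with hc | hc
      · rcases Nat.lt_or_ge (b+1) a with hd | hd
        · rw [gaInv_empty (by omega), gaInv_empty (by omega), one_mul, mul_one]
        · have hba : b + 1 = a := by omega
          rw [hba, gaInv_single, gaInv_single,
            (w_shift_gv (i := a) hq hm hn (by omega) (by omega)).symm]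
      · have h3 : b+1+2 = (b+2)+1 := by omega
        rw [h3, gaInv_concat (a := a+2) (b := b+2) (by omega),
          gaInv_concat (a := a) (b := b) (by omega)]
        have h4 : b + 2 + 1 = (b+1) + 2 := by omega
        calc gaInv R n q qi r δ (a+2) (b+2) * gv (b+2+1) * w m
            = gaInv R n q qi r δ (a+2) (b+2) * (gv ((b+1)+2) * w m) := by
              rw [mul_assoc, h4]
          _ = gaInv R n q qi r δ (a+2) (b+2) * (w m * gv (b+1)) := by
              rw [← w_shift_gv hq hm hn (by omega) (by omega)]
          _ = gaInv R n q qi r δ (a+2) (b+2) * w m * gv (b+1) := by rw [mul_assoc]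
          _ = w m * gaInv R n q qi r δ a b * gv (b+1) := by rw [ih (by omega)]
          _ = w m * (gaInv R n q qi r δ a b * gv (b+1)) := by rw [mul_assoc]


lemma c_mul_w {j m : ℕ} (hq : q * qi = 1) (hjm : j + 1 ≤ m) (hn : 2*m+2 ≤ n) :
    (cc (j+1) * w m : QBr R n q qi r δ) = w m * w j := by
  have e1 : 2*(j+1)+1 = (2*j+1)+2 := by omega
  have e2 : 2*(j+1) = (2*j)+2 := by omega
  have e3 : (4 : ℕ) = 2+2 := by norm_num
  have e4 : (3 : ℕ) = 1+2 := by norm_num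
  have hwj : (w j : QBr R n q qi r δ)
      = ga R n q qi r δ 2 (2*j+1) * gaInv R n q qi r δ 1 (2*j) := rfl
  rw [cc, hwj, e1, e2, e3, e4, mul_assoc,
    gaInv_conj_w hq (by omega) hn (by omega) (by omega), ← mul_assoc,
    ga_conj_w hq (by omega) hn (by omega) (by omega), mul_assoc]


lemma w1_eq : (w 1 : QBr R n q qi r δ) = g 2 * (g 3 * (gv 1 * gv 2)) := by
  have h1 : ga R n q qi r δ 2 (2*1+1) = g 2 * ga R n q qi r δ 3 3 := ga_cons (by omega)
  have h2 : gaInv R n q qi r δ 1 (2*1) = gv 1 * gaInv R n q qi r δ 2 2 := gaInv_cons (by omega)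
  rw [w, h1, h2, ga_single, gaInv_single]
  simp only [mul_assoc]

lemma rel_e3l_w (h : 4 ≤ n) :
    (w 1 * (ee * w 1 * ee) : QBr R n q qi r δ) = ee * w 1 * ee := by
  have h1 : (w 1 : QBr R n q qi r δ) = g 2 * g 3 * gv 1 * gv 2 := by
    rw [w1_eq]; simp only [mul_assoc]
  rw [h1]; exact rel_e3l h

lemma rel_e3r_w (h : 4 ≤ n) :
    ((ee * w 1 * ee) * w 1 : QBr R n q qi r δ) = ee * w 1 * ee := by
  have h1 : (w 1 : QBr R n q qi r δ) = g 2 * g 3 * gv 1 * gv 2 := by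
    rw [w1_eq]; simp only [mul_assoc]
  rw [h1]; exact rel_e3r h

lemma wfact {m : ℕ} (hm : 1 ≤ m) (hn : 2*m+2 ≤ n) :
    (w m : QBr R n q qi r δ) = w 1 * cc m := by
  have h1 : ga R n q qi r δ 2 (2*m+1) = g 2 * (g 3 * ga R n q qi r δ 4 (2*m+1)) := by
    rw [ga_cons (a := 2) (by omega), ga_cons (a := 3) (by omega)]
  have h2 : gaInv R n q qi r δ 1 (2*m) = gv 1 * (gv 2 * gaInv R n q qi r δ 3 (2*m)) := by
    rw [gaInv_cons (a := 1) (by omega), gaInv_cons (a := 2) (by omega)]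
  have hA1 : (ga R n q qi r δ 4 (2*m+1) * gv 1 : QBr R n q qi r δ)
      = gv 1 * ga R n q qi r δ 4 (2*m+1) :=
    ((commute_gv_of_g (x := ga R n q qi r δ 4 (2*m+1))
      ((commute_ga (x := (g 1 : QBr R n q qi r δ)) (fun j hj1 hj2 =>
        commute_g_g (by omega) (by omega) (by omega))).symm))).eq
  have hA2 : (ga R n q qi r δ 4 (2*m+1) * gv 2 : QBr R n q qi r δ)
      = gv 2 * ga R n q qi r δ 4 (2*m+1) :=
    ((commute_gv_of_g (x := ga R n q qi r δ 4 (2*m+1))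
      ((commute_ga (x := (g 2 : QBr R n q qi r δ)) (fun j hj1 hj2 =>
        commute_g_g (by omega) (by omega) (by omega))).symm))).eq
  rw [w, h1, h2, w1_eq, cc]
  simp only [mul_assoc]
  rw [ra2 hA1, ra2 hA2]

lemma wstep {m : ℕ} (hn : 2*m+4 ≤ n) :
    (w (m+1) : QBr R n q qi r δ) = w m * s m := by
  have h1 : ga R n q qi r δ 2 (2*(m+1)+1)
      = ga R n q qi r δ 2 (2*m+1) * g (2*m+2) * g (2*m+3) := by
    have e1 : 2*(m+1)+1 = (2*m+2)+1 := by omega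
    have e2 : 2*m+2 = (2*m+1)+1 := by omega
    rw [e1, ga_concat (by omega), e2, ga_concat (by omega), ← e2]
  have h2 : gaInv R n q qi r δ 1 (2*(m+1))
      = gaInv R n q qi r δ 1 (2*m) * gv (2*m+1) * gv (2*m+2) := by
    have e1 : 2*(m+1) = (2*m+1)+1 := by omega
    have e2 : 2*m+1 = (2*m)+1 := by omega
    rw [e1, gaInv_concat (by omega), e2, gaInv_concat (by omega), ← e2]
  have hB2 : (g (2*m+2) * gaInv R n q qi r δ 1 (2*m) : QBr R n q qi r δ)
      = gaInv R n q qi r δ 1 (2*m) * g (2*m+2) :=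
    (commute_gaInv (x := (g (2*m+2) : QBr R n q qi r δ)) (fun j hj1 hj2 =>
      (commute_g_g (by omega) (by omega) (by omega)).symm)).eq
  have hB3 : (g (2*m+3) * gaInv R n q qi r δ 1 (2*m) : QBr R n q qi r δ)
      = gaInv R n q qi r δ 1 (2*m) * g (2*m+3) :=
    (commute_gaInv (x := (g (2*m+3) : QBr R n q qi r δ)) (fun j hj1 hj2 =>
      (commute_g_g (by omega) (by omega) (by omega)).symm)).eq
  rw [w, h1, h2, w, s]
  simp only [mul_assoc]
  rw [ra2 hB3, ra2 hB2]

-- commutation of e and ek with high-index letters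
lemma commute_e_cc {m : ℕ} (hn : 2*m+1 < n) :
    Commute (ee : QBr R n q qi r δ) (cc m) := by
  rw [cc]
  exact (commute_ga (fun j hj1 hj2 => commute_e_g (by omega) (by omega))).mul_right
    (commute_gaInv (fun j hj1 hj2 => commute_e_g (by omega) (by omega)))

lemma ek_comm_g {k i : ℕ} (h1 : 2*k+1 ≤ i) (h2 : i < n) :
    Commute (ek R n q qi r δ k) (g i) := by
  induction k with
  | zero => exact Commute.one_left _
  | succ k ih =>
      show Commute (E R n q qi r δ * ga R n q qi r δ 2 (2*k+1) *
        gaInv R n q qi r δ 1 (2*k) * ek R n q qi r δ k) (g i)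
      refine Commute.mul_left (Commute.mul_left (Commute.mul_left ?_ ?_) ?_) ?_
      · exact commute_e_g (by omega) h2
      · exact (commute_ga (fun j hj1 hj2 =>
          commute_g_g (by omega) (by omega) h2 |>.symm)).symm
      · exact (commute_gaInv (fun j hj1 hj2 =>
          commute_g_g (by omega) (by omega) h2 |>.symm)).symm
      · exact ih (by omega)

lemma ek_comm_gv {k i : ℕ} (h1 : 2*k+1 ≤ i) (h2 : i < n) :
    Commute (ek R n q qi r δ k) (gv i) :=
  commute_gv_of_g (ek_comm_g h1 h2)

lemma ek_comm_s {k m : ℕ} (hk : k ≤ m) (hn : 2*m+4 ≤ n) :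
    Commute (ek R n q qi r δ k) (s m) := by
  rw [s]
  exact (ek_comm_g (by omega) (by omega)).mul_right
    (((ek_comm_g (by omega) (by omega))).mul_right
      ((ek_comm_gv (by omega) (by omega)).mul_right (ek_comm_gv (by omega) (by omega))))

-- ek basics
lemma ek_succ (k : ℕ) : ek R n q qi r δ (k+1) = ee * (w k * ek R n q qi r δ k) := by
  show E R n q qi r δ * ga R n q qi r δ 2 (2*k+1) * gaInv R n q qi r δ 1 (2*k) *
    ek R n q qi r δ k = _
  rw [w, ee]
  simp only [mul_assoc]

lemma ek_one : ek R n q qi r δ 1 = ee := by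
  show E R n q qi r δ * ga R n q qi r δ 2 (2*0+1) * gaInv R n q qi r δ 1 (2*0) *
    ek R n q qi r δ 0 = ee
  rw [ga_empty (by omega), gaInv_empty (by omega)]
  show E R n q qi r δ * 1 * 1 * 1 = ee
  rw [mul_one, mul_one, mul_one, ee]

lemma ek_two : ek R n q qi r δ 2 = ee * (w 1 * ee) := by
  rw [ek_succ 1, ek_one]

lemma e_mul_ek {k : ℕ} (hk : 1 ≤ k) :
    (ee * ek R n q qi r δ k : QBr R n q qi r δ) = δ • ek R n q qi r δ k := by
  obtain ⟨k', rfl⟩ : ∃ k'', k = k'' + 1 := ⟨k - 1, by omega⟩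
  rw [ek_succ, ← mul_assoc, rel_ee, smul_mul_assoc]

lemma ek_mul_e {k : ℕ} (hk : 1 ≤ k) :
    (ek R n q qi r δ k * ee : QBr R n q qi r δ) = δ • ek R n q qi r δ k := by
  induction k with
  | zero => omega
  | succ k ih =>
      rcases Nat.eq_zero_or_pos k with hk0 | hk0
      · subst hk0
        rw [ek_one, rel_ee]
      · rw [ek_succ]
        simp only [mul_assoc]
        rw [ih hk0, mul_smul_comm, mul_smul_comm, ← ek_succ]


-- continuation helpers for the E3 relations
lemma cont4 {M : Type*} [Semigroup M] {a b c d : M} (h : a*(b*(c*d)) = b*(c*d)) (x : M) :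
    a*(b*(c*(d*x))) = b*(c*(d*x)) := by
  have h1 : a*(b*(c*(d*x))) = (a*(b*(c*d)))*x := by simp only [mul_assoc]
  rw [h1, h]; simp only [mul_assoc]

lemma cont4r {M : Type*} [Semigroup M] {a b c d : M} (h : a*(b*(c*d)) = a*(b*c)) (x : M) :
    a*(b*(c*(d*x))) = a*(b*(c*x)) := by
  have h1 : a*(b*(c*(d*x))) = (a*(b*(c*d)))*x := by simp only [mul_assoc]
  rw [h1, h]; simp only [mul_assoc]

-- left absorption of w 1
lemma WL1 {k : ℕ} (hq : q * qi = 1) (hk : 2 ≤ k) (hn : 2*k ≤ n) :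
    (w 1 * ek R n q qi r δ k : QBr R n q qi r δ) = ek R n q qi r δ k := by
  induction k with
  | zero => omega
  | succ k ih =>
      rcases Nat.lt_or_ge k 2 with hk2 | hk2
      · have hk1 : k = 1 := by omega
        subst hk1
        rw [ek_two]
        simpa only [mul_assoc] using
          rel_e3l_w (R := R) (n := n) (q := q) (qi := qi) (r := r) (δ := δ) (by omega)
      · obtain ⟨k', rfl⟩ : ∃ k'', k = k'' + 1 := ⟨k - 1, by omega⟩
        have he3 : (w 1 * (ee * (w 1 * ee)) : QBr R n q qi r δ) = ee * (w 1 * ee) := by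
          simpa only [mul_assoc] using
            rel_e3l_w (R := R) (n := n) (q := q) (qi := qi) (r := r) (δ := δ) (by omega)
        have hcc : (cc (k'+1) * ee : QBr R n q qi r δ) = ee * cc (k'+1) :=
          (commute_e_cc (by omega)).symm.eq
        calc w 1 * ek R n q qi r δ (k'+1+1)
            = w 1 * (ee * (w (k'+1) * (ee * (w k' * ek R n q qi r δ k')))) := by
              rw [ek_succ (k'+1), ek_succ k']
          _ = w 1 * (ee * (w 1 * (cc (k'+1) * (ee * (w k' * ek R n q qi r δ k'))))) := by
              rw [wfact (m := k'+1) (by omega) (by omega)]; simp only [mul_assoc]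
          _ = w 1 * (ee * (w 1 * (ee * (cc (k'+1) * (w k' * ek R n q qi r δ k'))))) := by
              rw [ra2 hcc]
          _ = ee * (w 1 * (ee * (cc (k'+1) * (w k' * ek R n q qi r δ k')))) :=
              cont4 he3 _
          _ = ee * (w 1 * (cc (k'+1) * (ee * (w k' * ek R n q qi r δ k')))) := by
              rw [ra2 hcc]
          _ = ee * (w (k'+1) * (ee * (w k' * ek R n q qi r δ k'))) := by
              rw [wfact (m := k'+1) (by omega) (by omega)]; simp only [mul_assoc]
          _ = ek R n q qi r δ (k'+1+1) := by rw [ek_succ (k'+1), ek_succ k']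

-- left absorption of w j
lemma WL {j : ℕ} (hq : q * qi = 1) :
    ∀ k, 1 ≤ j → j < k → 2*k ≤ n →
      (w j * ek R n q qi r δ k : QBr R n q qi r δ) = ek R n q qi r δ k := by
  induction j with
  | zero => intro k h; omega
  | succ j ih =>
      intro k hj hjk hn
      rcases Nat.eq_zero_or_pos j with hj0 | hj0
      · subst hj0; exact WL1 hq (by omega) hn
      · obtain ⟨k', rfl⟩ : ∃ k'', k = k'' + 1 := ⟨k - 1, by omega⟩
        have hcc : (cc (j+1) * ee : QBr R n q qi r δ) = ee * cc (j+1) :=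
          (commute_e_cc (by omega)).symm.eq
        calc w (j+1) * ek R n q qi r δ (k'+1)
            = w 1 * (cc (j+1) * (ee * (w k' * ek R n q qi r δ k'))) := by
              rw [ek_succ k', wfact (m := j+1) (by omega) (by omega)]
              simp only [mul_assoc]
          _ = w 1 * (ee * (cc (j+1) * (w k' * ek R n q qi r δ k'))) := by rw [ra2 hcc]
          _ = w 1 * (ee * (w k' * (w j * ek R n q qi r δ k'))) := by
              have hcw := c_mul_w (R := R) (n := n) (q := q) (qi := qi) (r := r)
                (δ := δ) (j := j) (m := k') hq (by omega) (by omega)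
              rw [ra2 hcw]
          _ = w 1 * (ee * (w k' * ek R n q qi r δ k')) := by
              rw [ih k' hj0 (by omega) (by omega)]
          _ = w 1 * ek R n q qi r δ (k'+1) := by rw [ek_succ k']
          _ = ek R n q qi r δ (k'+1) := WL1 hq (by omega) hn

-- right absorption, top case
lemma TR {j : ℕ} (hq : q * qi = 1) :
    1 ≤ j → 2*j+2 ≤ n →
      (ek R n q qi r δ (j+1) * w j : QBr R n q qi r δ) = ek R n q qi r δ (j+1) := by
  induction j with
  | zero => omega
  | succ j ih =>
      intro hj hn
      rcases Nat.eq_zero_or_pos j with hj0 | hj0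
      · subst hj0
        rw [ek_two]
        simpa only [mul_assoc] using
          rel_e3r_w (R := R) (n := n) (q := q) (qi := qi) (r := r) (δ := δ) (by omega)
      · have hstep : (w (j+1) : QBr R n q qi r δ) = w j * s j := wstep (by omega)
        have h1 : (ek R n q qi r δ (j+1) * w (j+1) : QBr R n q qi r δ)
            = ee * (w (j+1) * ek R n q qi r δ j) := by
          calc ek R n q qi r δ (j+1) * w (j+1)
              = ek R n q qi r δ (j+1) * w j * s j := by rw [hstep, mul_assoc]
            _ = ek R n q qi r δ (j+1) * s j := by rw [ih hj0 (by omega)]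
            _ = ee * (w j * (ek R n q qi r δ j * s j)) := by
                  rw [ek_succ j]; simp only [mul_assoc]
            _ = ee * (w j * (s j * ek R n q qi r δ j)) := by
                  rw [(ek_comm_s (k := j) (m := j) (le_refl j) (by omega)).eq]
            _ = ee * ((w j * s j) * ek R n q qi r δ j) := by simp only [mul_assoc]
            _ = ee * (w (j+1) * ek R n q qi r δ j) := by rw [hstep]
        have he3 : (ee * (w 1 * (ee * w 1)) : QBr R n q qi r δ) = ee * (w 1 * ee) := by
          simpa only [mul_assoc] using
            rel_e3r_w (R := R) (n := n) (q := q) (qi := qi) (r := r) (δ := δ) (by omega)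
        have hcc : (cc (j+1) * ee : QBr R n q qi r δ) = ee * cc (j+1) :=
          (commute_e_cc (by omega)).symm.eq
        have hwf : (w 1 * cc (j+1) : QBr R n q qi r δ) = w (j+1) :=
          (wfact (m := j+1) (by omega) (by omega)).symm
        have hQ : ∀ z : QBr R n q qi r δ,
            ee * (w (j+1) * (ee * (w (j+1) * z)))
              = ee * (w (j+1) * (ee * (w j * z))) := by
          intro z
          calc ee * (w (j+1) * (ee * (w (j+1) * z)))
              = ee * (w 1 * (cc (j+1) * (ee * (w (j+1) * z)))) := by
                rw [ra1 hwf (ee * (w (j+1) * z))]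
            _ = ee * (w 1 * (ee * (cc (j+1) * (w (j+1) * z)))) := by rw [ra2 hcc]
            _ = ee * (w 1 * (ee * (w (j+1) * (w j * z)))) := by
                have hcw := c_mul_w (R := R) (n := n) (q := q) (qi := qi) (r := r)
                  (δ := δ) (j := j) (m := j+1) hq (by omega) (by omega)
                rw [ra2 hcw]
            _ = ee * (w 1 * (ee * (w 1 * (cc (j+1) * (w j * z))))) := by
                rw [ra1 hwf (w j * z)]
            _ = ee * (w 1 * (ee * (cc (j+1) * (w j * z)))) := cont4r he3 _
            _ = ee * (w 1 * (cc (j+1) * (ee * (w j * z)))) := by rw [ra2 hcc]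
            _ = ee * (w (j+1) * (ee * (w j * z))) := by
                rw [ra1 hwf (ee * (w j * z))]
        calc ek R n q qi r δ (j+1+1) * w (j+1)
            = ee * (w (j+1) * (ek R n q qi r δ (j+1) * w (j+1))) := by
              rw [ek_succ (j+1)]; simp only [mul_assoc]
          _ = ee * (w (j+1) * (ee * (w (j+1) * ek R n q qi r δ j))) := by rw [h1]
          _ = ee * (w (j+1) * (ee * (w j * ek R n q qi r δ j))) := hQ _
          _ = ee * (w (j+1) * ek R n q qi r δ (j+1)) := by rw [ek_succ j]
          _ = ek R n q qi r δ (j+1+1) := by rw [ek_succ (j+1)]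

-- right absorption, general
lemma ER {j k : ℕ} (hq : q * qi = 1) (hj : 1 ≤ j) (hjk : j < k) (hn : 2*k ≤ n) :
    (ek R n q qi r δ k * w j : QBr R n q qi r δ) = ek R n q qi r δ k := by
  induction k with
  | zero => omega
  | succ k ih =>
      rcases Nat.lt_or_ge j k with hc | hc
      · calc ek R n q qi r δ (k+1) * w j
            = ee * (w k * (ek R n q qi r δ k * w j)) := by
              rw [ek_succ k]; simp only [mul_assoc]
          _ = ee * (w k * ek R n q qi r δ k) := by rw [ih hc (by omega)]
          _ = ek R n q qi r δ (k+1) := by rw [ek_succ k]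
      · have : j = k := by omega
        subst this
        exact TR hq hj (by omega)


lemma stmt9_aux {j : ℕ} (hq : q * qi = 1) :
    ∀ k, 1 ≤ j → j ≤ k → 2*k ≤ n →
      (ek R n q qi r δ j * ek R n q qi r δ k = δ^j • ek R n q qi r δ k ∧
       ek R n q qi r δ k * ek R n q qi r δ j = δ^j • ek R n q qi r δ k) := by
  induction j with
  | zero => intro k h; omega
  | succ j ih =>
      intro k hj hjk hn
      rcases Nat.eq_zero_or_pos j with hj0 | hj0
      · subst hj0
        constructor
        · rw [ek_one, e_mul_ek (by omega), pow_one]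
        · rw [ek_one, ek_mul_e (by omega), pow_one]
      · obtain ⟨hl, hr⟩ := ih k hj0 (by omega) hn
        constructor
        · calc ek R n q qi r δ (j+1) * ek R n q qi r δ k
              = ee * (w j * (ek R n q qi r δ j * ek R n q qi r δ k)) := by
                rw [ek_succ j]; simp only [mul_assoc]
            _ = ee * (w j * (δ^j • ek R n q qi r δ k)) := by rw [hl]
            _ = δ^j • (ee * (w j * ek R n q qi r δ k)) := by
                rw [mul_smul_comm, mul_smul_comm]
            _ = δ^j • (ee * ek R n q qi r δ k) := by
                rw [WL hq k hj0 (by omega) hn]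
            _ = δ^j • (δ • ek R n q qi r δ k) := by rw [e_mul_ek (by omega)]
            _ = δ^(j+1) • ek R n q qi r δ k := by rw [smul_smul, ← pow_succ]
        · calc ek R n q qi r δ k * ek R n q qi r δ (j+1)
              = ek R n q qi r δ k * (ee * (w j * ek R n q qi r δ j)) := by
                rw [ek_succ j]
            _ = (ek R n q qi r δ k * ee) * (w j * ek R n q qi r δ j) := by
                rw [mul_assoc]
            _ = (δ • ek R n q qi r δ k) * (w j * ek R n q qi r δ j) := by
                rw [ek_mul_e (by omega)]
            _ = δ • ((ek R n q qi r δ k * w j) * ek R n q qi r δ j) := by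
                rw [smul_mul_assoc, mul_assoc]
            _ = δ • (ek R n q qi r δ k * ek R n q qi r δ j) := by
                rw [ER hq hj0 (by omega) hn]
            _ = δ • (δ^j • ek R n q qi r δ k) := by rw [hr]
            _ = δ^(j+1) • ek R n q qi r δ k := by rw [smul_smul, ← pow_succ']

end Dev

end qB


open qB in
/-- `e_(j) e_(k) = e_(k) e_(j) = δ^j e_(k)` for `1 ≤ j ≤ k`, `2k ≤ n`. -/
theorem stmt9 (R : Type) [CommRing R] (n : ℕ) (q qi r ri δ : R)
    (hq : q * qi = 1) (hr : r * ri = 1) (hδ : (q - 1) * δ = r - 1)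
    (j k : ℕ) (h1 : 1 ≤ j) (h2 : j ≤ k) (h3 : 2 * k ≤ n) :
    ek R n q qi r δ j * ek R n q qi r δ k = δ ^ j • ek R n q qi r δ k ∧
    ek R n q qi r δ k * ek R n q qi r δ j = δ ^ j • ek R n q qi r δ k :=
  qB.stmt9_aux hq k h1 h2 h3
end
end
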